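/- arXiv:2007.00085 — 8 statements merged into one kernel-verified Lean document; each statement's English description precedes it below -/
import Mathlib

section
/- If a belief b is winning for an almost-sure reach-avoid specification in a POMDP, then any belief b' with the same support as b is also winning. -/
open scoped ENNReal Classical

/-- A POMDP: transition function `P` and observation function `obs`. -/
structure POMDP (S Act Ω : Type) where
  P : S → Act → PMF S
  obs : S → Ω

namespace POMDP

variable {S Act Ω : Type}

/-- A history-dependent observation-based policy: maps the observation-action
history and the current observation to a distribution over actions. -/
def Policy (Act Ω : Type) := List (Ω × Act) → Ω → PMF Act

/-- Probability to reach `T` within `n` steps, starting in state `s` with history `h`. -/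
noncomputable def reachN (M : POMDP S Act Ω) (σ : Policy Act Ω) (T : Set S) :
    ℕ → List (Ω × Act) → S → ℝ≥0∞
  | 0, _, s => if s ∈ T then 1 else 0
  | n + 1, h, s =>
    if s ∈ T then 1
    else ∑' α : Act, σ h (M.obs s) α *
      ∑' s' : S, M.P s α s' * M.reachN σ T n (h ++ [(M.obs s, α)]) s'

/-- Probability to eventually reach `T` from initial belief `b` under policy `σ`. -/
noncomputable def prReach (M : POMDP S Act Ω) (σ : Policy Act Ω) (T : Set S)
    (b : PMF S) : ℝ≥0∞ :=
  ⨆ n, ∑' s : S, b s * M.reachN σ T n [] s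

/-- A policy is winning from belief `b`: AVOID reached with probability 0,
REACH reached with probability 1. -/
def WinningPolicyFrom (M : POMDP S Act Ω) (REACH AVOID : Set S)
    (σ : Policy Act Ω) (b : PMF S) : Prop :=
  M.prReach σ AVOID b = 0 ∧ M.prReach σ REACH b = 1

/-- A belief is winning if some winning policy exists from it. -/
def WinningBelief (M : POMDP S Act Ω) (REACH AVOID : Set S) (b : PMF S) : Prop :=
  ∃ σ, M.WinningPolicyFrom REACH AVOID σ b

/-- A set of states is absorbing. -/
def Absorbing (M : POMDP S Act Ω) (T : Set S) : Prop :=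
  ∀ s ∈ T, ∀ α, M.P s α = PMF.pure s

/-- A belief support: a nonempty set of states sharing a common observation. -/
def IsBeliefSupport (M : POMDP S Act Ω) (b : Set S) : Prop :=
  b.Nonempty ∧ ∀ s ∈ b, ∀ s' ∈ b, M.obs s = M.obs s'

/-- A policy is winning from a belief support `b` if it is winning from every
belief whose support is `b`. -/
def WinningFromSupport (M : POMDP S Act Ω) (REACH AVOID : Set S)
    (σ : Policy Act Ω) (b : Set S) : Prop :=
  ∀ β : PMF S, β.support = b → M.WinningPolicyFrom REACH AVOID σ β

/-- A belief support is winning if some policy is winning from it. -/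
def WinningSupport (M : POMDP S Act Ω) (REACH AVOID : Set S) (b : Set S) : Prop :=
  ∃ σ, M.WinningFromSupport REACH AVOID σ b

end POMDP


section Aux
open POMDP

variable {S Act Ω : Type}

lemma reachN_le_succ (M : POMDP S Act Ω) (σ : POMDP.Policy Act Ω) (T : Set S) :
    ∀ n h s, M.reachN σ T n h s ≤ M.reachN σ T (n+1) h s := by
  intro n
  induction n with
  | zero =>
    intro h s
    simp only [POMDP.reachN]
    split <;> simp
  | succ n ih =>
    intro h s
    simp only [POMDP.reachN]
    split
    · exact le_refl _
    · refine ENNReal.tsum_le_tsum fun α => mul_le_mul_right ?_ _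
      exact ENNReal.tsum_le_tsum fun s' => mul_le_mul_right (ih _ _) _

lemma reachN_mono (M : POMDP S Act Ω) (σ : POMDP.Policy Act Ω) (T : Set S)
    (h : List (Ω × Act)) (s : S) : Monotone (fun n => M.reachN σ T n h s) :=
  monotone_nat_of_le_succ fun n => reachN_le_succ M σ T n h s

lemma reachN_le_one (M : POMDP S Act Ω) (σ : POMDP.Policy Act Ω) (T : Set S) :
    ∀ n h s, M.reachN σ T n h s ≤ 1 := by
  intro n
  induction n with
  | zero =>
    intro h s
    simp only [POMDP.reachN]
    split <;> simp
  | succ n ih =>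
    intro h s
    simp only [POMDP.reachN]
    split
    · exact le_refl _
    · calc ∑' α : Act, σ h (M.obs s) α * ∑' s' : S, M.P s α s' *
            M.reachN σ T n (h ++ [(M.obs s, α)]) s'
          ≤ ∑' α : Act, σ h (M.obs s) α * 1 := by
            refine ENNReal.tsum_le_tsum fun α => mul_le_mul_right ?_ _
            calc (∑' s' : S, M.P s α s' * M.reachN σ T n (h ++ [(M.obs s, α)]) s')
                ≤ ∑' s' : S, M.P s α s' * 1 :=
                  ENNReal.tsum_le_tsum fun s' => mul_le_mul_right (ih _ _) _
              _ = 1 := by simp [(M.P s α).tsum_coe]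
        _ = 1 := by simp [(σ h (M.obs s)).tsum_coe]

lemma prReach_eq (M : POMDP S Act Ω) [Fintype S] (σ : POMDP.Policy Act Ω) (T : Set S)
    (b : PMF S) :
    M.prReach σ T b = ∑' s : S, b s * ⨆ n, M.reachN σ T n [] s := by
  unfold POMDP.prReach
  simp_rw [tsum_fintype, ENNReal.mul_iSup]
  exact (ENNReal.finsetSum_iSup_of_monotone
    (f := fun s n => b s * M.reachN σ T n [] s)
    (fun s m n hmn => mul_le_mul_right (reachN_mono M σ T [] s hmn) _)).symm

end Aux

/-- If a belief `b` is winning for an almost-sure reach-avoid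
specification in a POMDP, then any belief `b'` with the same support is winning. -/
theorem winning_of_same_support {S Act Ω : Type} [Fintype S] [Fintype Act]
    (M : POMDP S Act Ω) (REACH AVOID : Set S)
    (hdisj : Disjoint REACH AVOID)
    (hR : M.Absorbing REACH) (hA : M.Absorbing AVOID)
    (b b' : PMF S) (hsupp : b.support = b'.support)
    (hwin : M.WinningBelief REACH AVOID b) :
    M.WinningBelief REACH AVOID b' := by
  obtain ⟨σ, h0, h1⟩ := hwin
  set FA : S → ℝ≥0∞ := fun s => ⨆ n, M.reachN σ AVOID n [] s with hFA
  set FR : S → ℝ≥0∞ := fun s => ⨆ n, M.reachN σ REACH n [] s with hFR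
  rw [prReach_eq] at h0 h1
  have hFRle : ∀ s, FR s ≤ 1 := fun s => iSup_le fun n => reachN_le_one M σ REACH n [] s
  -- from h1 : every term equals b s
  have hterm : ∀ s, b s * FR s = b s := by
    intro s
    have hle : ∀ s, b s * FR s ≤ b s := fun s => by
      calc b s * FR s ≤ b s * 1 := mul_le_mul_right (hFRle s) _
        _ = b s := mul_one _
    by_contra hne
    have hlt : b s * FR s < b s := lt_of_le_of_ne (hle s) hne
    have : (∑' s : S, b s * FR s) < ∑' s : S, b s :=
      ENNReal.tsum_lt_tsum (by rw [h1]; exact ENNReal.one_ne_top) hle hlt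
    rw [h1, b.tsum_coe] at this
    exact lt_irrefl 1 this
  have hFR1 : ∀ s ∈ b.support, FR s = 1 := by
    intro s hs
    have hb0 : b s ≠ 0 := by simpa [PMF.mem_support_iff] using hs
    by_contra hne
    have hlt : FR s < 1 := lt_of_le_of_ne (hFRle s) hne
    have : b s * FR s < b s * 1 :=
      (ENNReal.mul_lt_mul_iff_right hb0 (b.apply_ne_top s)).mpr hlt
    rw [mul_one, hterm s] at this
    exact lt_irrefl _ this
  have hFA0 : ∀ s ∈ b.support, FA s = 0 := by
    intro s hs
    have h0s : b s * FA s = 0 := by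
      have := (ENNReal.tsum_eq_zero.mp h0) s
      exact this
    rcases mul_eq_zero.mp h0s with h | h
    · exact absurd h (by simpa [PMF.mem_support_iff] using hs)
    · exact h
  refine ⟨σ, ?_, ?_⟩
  · rw [prReach_eq]
    refine ENNReal.tsum_eq_zero.mpr fun s => ?_
    by_cases hs : b' s = 0
    · simp [hs]
    · have : s ∈ b.support := hsupp ▸ (PMF.mem_support_iff b' s).mpr hs
      have : (⨆ n, M.reachN σ AVOID n [] s) = 0 := hFA0 s this
      rw [this, mul_zero]
  · rw [prReach_eq]
    have : ∀ s, b' s * FR s = b' s := by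
      intro s
      by_cases hs : b' s = 0
      · simp [hs]
      · have : s ∈ b.support := hsupp ▸ (PMF.mem_support_iff b' s).mpr hs
        rw [hFR1 s this, mul_one]
    rw [show (∑' s, b' s * ⨆ n, M.reachN σ REACH n [] s) = ∑' s, b' s from tsum_congr this]
    exact b'.tsum_coe
end

section
/- If a policy σ is winning for belief supports b and b', then σ is also winning for the belief support b ∪ b'. -/
open scoped ENNReal Classical

namespace Aux
open POMDP
variable {S Act Ω : Type}

lemma reachN_le_one (M : POMDP S Act Ω) (σ : Policy Act Ω) (T : Set S) :
    ∀ n h s, M.reachN σ T n h s ≤ 1 := by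
  intro n
  induction n with
  | zero => intro h s; rw [POMDP.reachN]; split <;> simp
  | succ n ih =>
    intro h s
    rw [POMDP.reachN]
    split
    · exact le_rfl
    · calc (∑' α : Act, σ h (M.obs s) α *
          ∑' s' : S, M.P s α s' * M.reachN σ T n (h ++ [(M.obs s, α)]) s')
          ≤ ∑' α : Act, σ h (M.obs s) α * 1 := by
            refine ENNReal.tsum_le_tsum fun α => mul_le_mul_right ?_ _
            calc (∑' s' : S, M.P s α s' * M.reachN σ T n (h ++ [(M.obs s, α)]) s')
                ≤ ∑' s' : S, M.P s α s' * 1 :=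
                  ENNReal.tsum_le_tsum fun s' => mul_le_mul_right (ih _ _) _
              _ = 1 := by simp [(M.P s α).tsum_coe]
        _ = 1 := by simp [(σ h (M.obs s)).tsum_coe]

lemma reachN_mono (M : POMDP S Act Ω) (σ : Policy Act Ω) (T : Set S) :
    ∀ n h s, M.reachN σ T n h s ≤ M.reachN σ T (n + 1) h s := by
  intro n
  induction n with
  | zero =>
    intro h s
    rw [POMDP.reachN, POMDP.reachN]
    split
    · exact le_rfl
    · exact zero_le
  | succ n ih =>
    intro h s
    rw [POMDP.reachN]
    conv_rhs => rw [POMDP.reachN]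
    split
    · exact le_rfl
    · exact ENNReal.tsum_le_tsum fun α => mul_le_mul_right
        (ENNReal.tsum_le_tsum fun s' => mul_le_mul_right (ih _ _) _) _

lemma prReach_eq [Fintype S] (M : POMDP S Act Ω) (σ : Policy Act Ω) (T : Set S)
    (β : PMF S) :
    M.prReach σ T β = ∑' s : S, β s * ⨆ n, M.reachN σ T n [] s := by
  rw [POMDP.prReach]
  simp_rw [tsum_fintype]
  rw [← ENNReal.finsetSum_iSup_of_monotone
    (f := fun s n => β s * M.reachN σ T n [] s)
    (fun s => fun i j hij => mul_le_mul_right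
      (monotone_nat_of_le_succ (fun k => reachN_mono M σ T k [] s) hij) _)]
  exact Finset.sum_congr rfl fun s _ => (ENNReal.mul_iSup _ _).symm



lemma extract [Fintype S] (M : POMDP S Act Ω) (REACH AVOID : Set S)
    (σ : Policy Act Ω) (b : Set S) (hbne : b.Nonempty)
    (hσ : M.WinningFromSupport REACH AVOID σ b) :
    ∀ s ∈ b, (⨆ n, M.reachN σ AVOID n [] s) = 0 ∧
      (⨆ n, M.reachN σ REACH n [] s) = 1 := by
  have hfin : b.Finite := Set.toFinite b
  set β : PMF S := PMF.uniformOfFinset hfin.toFinset (hfin.toFinset_nonempty.mpr hbne)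
    with hβ
  have hsupp : β.support = b := by
    rw [hβ, PMF.support_uniformOfFinset, Set.Finite.coe_toFinset]
  have hwin := hσ β hsupp
  intro s0 hs0
  have hs0' : β s0 ≠ 0 := by
    rw [← PMF.mem_support_iff, hsupp]; exact hs0
  constructor
  · -- AVOID
    have h0 : ∑' s : S, β s * ⨆ n, M.reachN σ AVOID n [] s = 0 := by
      rw [← prReach_eq]; exact hwin.1
    have := ENNReal.tsum_eq_zero.mp h0 s0
    rcases mul_eq_zero.mp this with h | h
    · exact absurd h hs0'
    · exact h
  · -- REACH
    set F : S → ℝ≥0∞ := fun s => ⨆ n, M.reachN σ REACH n [] s with hF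
    have hF1 : ∀ s, F s ≤ 1 := fun s => iSup_le fun n => reachN_le_one M σ REACH n [] s
    have h1 : ∑ s : S, β s * F s = 1 := by
      rw [← tsum_fintype (L := SummationFilter.unconditional S), ← prReach_eq]; exact hwin.2
    have hsum : β s0 * F s0 + ∑ s ∈ Finset.univ.erase s0, β s * F s = 1 := by
      rw [Finset.add_sum_erase Finset.univ (fun s => β s * F s) (Finset.mem_univ s0)]; exact h1
    have hβsum : β s0 + ∑ s ∈ Finset.univ.erase s0, β s = 1 := by
      rw [Finset.add_sum_erase Finset.univ (fun s => β s) (Finset.mem_univ s0), ← tsum_fintype (L := SummationFilter.unconditional S)]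
      exact β.tsum_coe
    have hle : ∑ s ∈ Finset.univ.erase s0, β s * F s ≤ ∑ s ∈ Finset.univ.erase s0, β s :=
      Finset.sum_le_sum fun s _ => by
        calc β s * F s ≤ β s * 1 := mul_le_mul_right (hF1 s) _
          _ = β s := mul_one _
    have key : 1 + β s0 ≤ 1 + β s0 * F s0 := by
      calc 1 + β s0
          = (β s0 * F s0 + ∑ s ∈ Finset.univ.erase s0, β s * F s) + β s0 := by rw [hsum]
        _ ≤ (β s0 * F s0 + ∑ s ∈ Finset.univ.erase s0, β s) + β s0 :=
            add_le_add (add_le_add_right hle _) le_rfl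
        _ = (β s0 + ∑ s ∈ Finset.univ.erase s0, β s) + β s0 * F s0 := by ring
        _ = 1 + β s0 * F s0 := by rw [hβsum]
    have h2 : β s0 ≤ β s0 * F s0 :=
      (ENNReal.add_le_add_iff_left (by simp : (1 : ℝ≥0∞) ≠ ∞)).mp key
    have h3 : 1 ≤ F s0 := by
      refine (ENNReal.mul_le_mul_iff_right hs0' (β.apply_ne_top s0)).mp ?_
      rwa [mul_one]
    exact le_antisymm (hF1 s0) h3
end Aux


/-- If a policy `σ` is winning for belief supports `b` and `b'`
(sharing the same observation), then `σ` is also winning for `b ∪ b'`. -/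
theorem winning_policy_union {S Act Ω : Type} [Fintype S] [Fintype Act]
    (M : POMDP S Act Ω) (REACH AVOID : Set S)
    (hdisj : Disjoint REACH AVOID)
    (hR : M.Absorbing REACH) (hA : M.Absorbing AVOID)
    (b b' : Set S) (hb : M.IsBeliefSupport b) (hb' : M.IsBeliefSupport b')
    (hobs : ∀ s ∈ b, ∀ s' ∈ b', M.obs s = M.obs s')
    (σ : POMDP.Policy Act Ω)
    (hσ : M.WinningFromSupport REACH AVOID σ b)
    (hσ' : M.WinningFromSupport REACH AVOID σ b') :
    M.WinningFromSupport REACH AVOID σ (b ∪ b') := by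
  intro β hsupp
  have hex := Aux.extract M REACH AVOID σ b hb.1 hσ
  have hex' := Aux.extract M REACH AVOID σ b' hb'.1 hσ'
  have hmem : ∀ s ∈ β.support, (⨆ n, M.reachN σ AVOID n [] s) = 0 ∧
      (⨆ n, M.reachN σ REACH n [] s) = 1 := by
    intro s hs
    rw [hsupp] at hs
    rcases hs with hs | hs
    · exact hex s hs
    · exact hex' s hs
  constructor
  · rw [Aux.prReach_eq]
    refine ENNReal.tsum_eq_zero.mpr fun s => ?_
    by_cases h : β s = 0
    · rw [h, zero_mul]
    · rw [(hmem s h).1, mul_zero]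
  · rw [Aux.prReach_eq]
    have : ∀ s : S, β s * (⨆ n, M.reachN σ REACH n [] s) = β s := by
      intro s
      by_cases h : β s = 0
      · rw [h, zero_mul]
      · rw [(hmem s h).2, mul_one]
    rw [tsum_congr this]
    exact β.tsum_coe
end

section
/- In a finite Markov chain, from any state a bottom strongly connected component is reached with probability 1. -/
open scoped ENNReal Classical

/-- Probability that a finite Markov chain with kernel `K` reaches the set `T`
within `n` steps from state `s`. -/
noncomputable def mcReachN {S : Type} (K : S → PMF S) (T : Set S) :
    ℕ → S → ℝ≥0∞
  | 0, s => if s ∈ T then 1 else 0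
  | n + 1, s => if s ∈ T then 1 else ∑' t : S, K s t * mcReachN K T n t

/-- Probability that the chain eventually reaches `T` from `s`. -/
noncomputable def mcReach {S : Type} (K : S → PMF S) (T : Set S) (s : S) : ℝ≥0∞ :=
  ⨆ n, mcReachN K T n s

/-- `C` is a bottom strongly connected component of the Markov chain `K`:
nonempty, closed under transitions of positive probability, and strongly
connected. -/
def IsBSCC {S : Type} (K : S → PMF S) (C : Set S) : Prop :=
  C.Nonempty ∧ (∀ s ∈ C, ∀ t, K s t ≠ 0 → t ∈ C) ∧
    ∀ s ∈ C, ∀ t ∈ C, Relation.ReflTransGen (fun a b => K a b ≠ 0) s t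

/-- Every nonempty closed set contains a BSCC. -/
lemma exists_bscc_subset {S : Type} [Fintype S] (K : S → PMF S) (A : Set S)
    (hne : A.Nonempty) (hcl : ∀ s ∈ A, ∀ t, K s t ≠ 0 → t ∈ A) :
    ∃ C, IsBSCC K C ∧ C ⊆ A := by
  classical
  set r : S → S → Prop := fun a b => K a b ≠ 0 with hr
  set Rf : S → Finset S :=
    fun a => Finset.univ.filter (fun t => Relation.ReflTransGen r a t) with hRf
  obtain ⟨a, ha⟩ := hne
  obtain ⟨s₀, hs₀A, hmin⟩ := Finset.exists_min_image
    (Finset.univ.filter (· ∈ A)) (fun x => (Rf x).card) ⟨a, by simp [ha]⟩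
  have hs₀ : s₀ ∈ A := by simpa using hs₀A
  have hRsub : ∀ x ∈ A, ∀ t, Relation.ReflTransGen r x t → t ∈ A := by
    intro x hx t ht
    induction ht with
    | refl => exact hx
    | tail _ h ih => exact hcl _ ih _ h
  refine ⟨{t | Relation.ReflTransGen r s₀ t}, ⟨⟨s₀, Relation.ReflTransGen.refl⟩, ?_, ?_⟩,
    fun t ht => hRsub s₀ hs₀ t ht⟩
  · intro x hx t hxt
    exact Relation.ReflTransGen.tail hx hxt
  · intro x hx y hy
    have hxA : x ∈ A := hRsub s₀ hs₀ x hx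
    have hsub : Rf x ⊆ Rf s₀ := by
      intro t ht
      simp only [hRf, Finset.mem_filter, Finset.mem_univ, true_and] at ht ⊢
      exact Relation.ReflTransGen.trans hx ht
    have hcard : (Rf s₀).card ≤ (Rf x).card := hmin x (by simp [hxA])
    have heq : Rf x = Rf s₀ := Finset.eq_of_subset_of_card_le hsub hcard
    have hxs₀ : Relation.ReflTransGen r x s₀ := by
      have : s₀ ∈ Rf x := by
        rw [heq]
        simp only [hRf, Finset.mem_filter, Finset.mem_univ, true_and]
        exact Relation.ReflTransGen.refl
      simpa [hRf] using this
    exact Relation.ReflTransGen.trans hxs₀ hy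

lemma mcReachN_le_one {S : Type} (K : S → PMF S) (T : Set S) :
    ∀ n s, mcReachN K T n s ≤ 1 := by
  intro n
  induction n with
  | zero =>
    intro s
    rw [mcReachN]
    split <;> simp
  | succ n ih =>
    intro s
    rw [mcReachN]
    split
    · exact le_rfl
    · calc ∑' t : S, K s t * mcReachN K T n t
          ≤ ∑' t : S, K s t * 1 :=
            ENNReal.tsum_le_tsum fun t => mul_le_mul_right (ih t) _
        _ = 1 := by simpa using (K s).tsum_coe

lemma mcReachN_mono {S : Type} (K : S → PMF S) (T : Set S) :
    ∀ n s, mcReachN K T n s ≤ mcReachN K T (n + 1) s := by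
  intro n
  induction n with
  | zero =>
    intro s
    rw [mcReachN, mcReachN]
    split
    · exact le_rfl
    · exact zero_le
  | succ n ih =>
    intro s
    rw [mcReachN, show mcReachN K T (n + 1 + 1) s = if s ∈ T then 1 else
        ∑' t : S, K s t * mcReachN K T (n + 1) t from rfl]
    split
    · exact le_rfl
    · exact ENNReal.tsum_le_tsum fun t => mul_le_mul_right (ih t) _

lemma mcReach_le_one {S : Type} (K : S → PMF S) (T : Set S) (s : S) :
    mcReach K T s ≤ 1 :=
  iSup_le fun n => mcReachN_le_one K T n s

lemma mcReach_of_mem {S : Type} (K : S → PMF S) (T : Set S) {s : S} (hs : s ∈ T) :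
    mcReach K T s = 1 :=
  le_antisymm (mcReach_le_one K T s)
    (le_trans (by rw [mcReachN, if_pos hs]) (le_iSup (mcReachN K T · s) 0))

lemma mcReach_step {S : Type} [Fintype S] (K : S → PMF S) (T : Set S) {s : S}
    (hs : s ∉ T) :
    mcReach K T s = ∑ t : S, K s t * mcReach K T t := by
  have hmono : ∀ t : S, Monotone fun n => K s t * mcReachN K T n t := by
    intro t
    refine monotone_nat_of_le_succ fun n => ?_
    exact mul_le_mul_right (mcReachN_mono K T n t) _
  have h1 : mcReach K T s = ⨆ n, mcReachN K T (n + 1) s := by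
    refine le_antisymm (iSup_le fun n => ?_)
      (iSup_le fun n => le_iSup (fun k => mcReachN K T k s) (n + 1))
    calc mcReachN K T n s ≤ mcReachN K T (n + 1) s := mcReachN_mono K T n s
      _ ≤ ⨆ n, mcReachN K T (n + 1) s := le_iSup (fun n => mcReachN K T (n + 1) s) n
  rw [h1]
  have h2 : ∀ n, mcReachN K T (n + 1) s = ∑ t : S, K s t * mcReachN K T n t := by
    intro n
    rw [mcReachN, if_neg hs, tsum_fintype]
  simp only [h2]
  rw [← ENNReal.finsetSum_iSup_of_monotone hmono]
  congr 1
  ext t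
  rw [mcReach, ENNReal.mul_iSup]

/-- In a finite Markov chain, from any state some bottom strongly
connected component is reached with probability 1. -/
theorem mc_reaches_bscc {S : Type} [Fintype S] (K : S → PMF S) (s : S) :
    mcReach K {t | ∃ C, IsBSCC K C ∧ t ∈ C} s = 1 := by
  classical
  set T : Set S := {t | ∃ C, IsBSCC K C ∧ t ∈ C} with hT
  set p : S → ℝ≥0∞ := mcReach K T with hp
  obtain ⟨s₀, -, hmin⟩ := Finset.exists_min_image Finset.univ p ⟨s, Finset.mem_univ s⟩
  have hmin' : ∀ t : S, p s₀ ≤ p t := fun t => hmin t (Finset.mem_univ t)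
  set m : ℝ≥0∞ := p s₀ with hm
  have hple : ∀ t, p t ≤ 1 := fun t => mcReach_le_one K T t
  have hm1 : m ≤ 1 := hple s₀
  set A : Set S := {t | p t = m} with hA
  have hAne : A.Nonempty := ⟨s₀, rfl⟩
  have hAcl : ∀ x ∈ A, ∀ t, K x t ≠ 0 → t ∈ A := by
    intro x hx t hkt
    by_cases hxT : x ∈ T
    · have hx1 : p x = 1 := mcReach_of_mem K T hxT
      have hm1' : m = 1 := by rw [← hx]; exact hx1
      exact le_antisymm (hm1' ▸ hple t) (hmin' t)
    · refine le_antisymm ?_ (hmin' t)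
      by_contra hlt
      push_neg at hlt
      have hsum : p x = ∑ u : S, K x u * p u := mcReach_step K T hxT
      have hKsum : ∑ u : S, (K x u : ℝ≥0∞) = 1 := by
        rw [← tsum_fintype (L := SummationFilter.unconditional _)]; exact (K x).tsum_coe
      have hmm : (∑ u : S, K x u * m) = m := by
        rw [← Finset.sum_mul, hKsum, one_mul]
      have hKtop : (K x t : ℝ≥0∞) ≠ ⊤ := ne_top_of_le_ne_top ENNReal.one_ne_top
        ((K x).coe_le_one t)
      have hlt' : K x t * m < K x t * p t :=
        (ENNReal.mul_lt_mul_iff_right hkt hKtop).mpr hlt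
      have : m < p x := by
        rw [hsum, ← hmm, ← tsum_fintype (L := SummationFilter.unconditional _), ← tsum_fintype (L := SummationFilter.unconditional _)]
        refine ENNReal.tsum_lt_tsum (i := t) ?_
          (fun u => mul_le_mul_right (hmin' u) _) hlt'
        rw [tsum_fintype, hmm]
        exact ne_top_of_le_ne_top ENNReal.one_ne_top hm1
      have hx' : p x = m := hx
      rw [hx'] at this
      exact lt_irrefl m this
  obtain ⟨C, hC, hCA⟩ := exists_bscc_subset K A hAne hAcl
  obtain ⟨c, hc⟩ := hC.1
  have hcT : c ∈ T := ⟨C, hC, hc⟩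
  have hpc : p c = 1 := mcReach_of_mem K T hcT
  have hcm : p c = m := hCA hc
  have hm1'' : m = 1 := by rw [← hcm, hpc]
  exact le_antisymm (hple s) (hm1'' ▸ hmin' s)
end

section
/- For a POMDP P and a policy σ with associated winning region W, the set of winning belief supports of the shortcutted POMDP P{σ} coincides with that of P. -/
open scoped ENNReal Classical

namespace POMDP

variable {S Act Ω : Type}

/-- The shortcutted POMDP `P{σ}`: a fresh action (encoded by `none`) leads
surely to `top` from states whose singleton support is in the winning region `W`
of the policy `σ`, and surely to `bot` otherwise. All original transitions and
the observation function are preserved. -/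
noncomputable def shortcut (M : POMDP S Act Ω) (W : Set (Set S)) (top bot : S) :
    POMDP S (Option Act) Ω where
  P := fun s α =>
    match α with
    | some a => M.P s a
    | none => PMF.pure (if ({s} : Set S) ∈ W then top else bot)
  obs := M.obs

end POMDP

namespace POMDP

open Finset

set_option linter.unusedSectionVars false

variable {S Act Ω : Type} [Fintype S] [Fintype Act]

/-! ### Basic lemmas about `reachN` and `prReach` -/

lemma reachN_zero (M : POMDP S Act Ω) (σ : Policy Act Ω) (T : Set S)
    (h : List (Ω × Act)) (s : S) :
    M.reachN σ T 0 h s = if s ∈ T then 1 else 0 := rfl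

lemma reachN_succ (M : POMDP S Act Ω) (σ : Policy Act Ω) (T : Set S)
    (n : ℕ) (h : List (Ω × Act)) (s : S) :
    M.reachN σ T (n+1) h s = if s ∈ T then 1
      else ∑' α : Act, σ h (M.obs s) α *
        ∑' s' : S, M.P s α s' * M.reachN σ T n (h ++ [(M.obs s, α)]) s' := rfl

lemma tsum_pure_mul (c : S) (f : S → ℝ≥0∞) :
    ∑' s' : S, (PMF.pure c) s' * f s' = f c := by
  rw [tsum_fintype]
  rw [Finset.sum_eq_single c (fun b _ hb => by simp [PMF.pure_apply, hb]) (by simp)]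
  simp [PMF.pure_apply]

lemma sum_pmf_eq_one {α : Type} [Fintype α] (p : PMF α) : ∑ a, p a = 1 := by
  rw [← tsum_fintype (L := SummationFilter.unconditional _)]; exact p.tsum_coe

lemma sum_option_split (f : Option Act → ℝ≥0∞) :
    ∑ α : Option Act, f α = f none + ∑ a : Act, f (some a) := by
  rw [univ_option, Finset.sum_insertNone]

lemma reachN_of_mem (M : POMDP S Act Ω) (σ : Policy Act Ω) (T : Set S)
    (n : ℕ) (h : List (Ω × Act)) {s : S} (hs : s ∈ T) :
    M.reachN σ T n h s = 1 := by
  cases n <;> simp [reachN_zero, reachN_succ, hs]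

lemma reachN_succ_of_not_mem (M : POMDP S Act Ω) (σ : Policy Act Ω) (T : Set S)
    (n : ℕ) {s : S} (hs : s ∉ T) (h : List (Ω × Act)) :
    M.reachN σ T (n+1) h s = ∑ a : Act, σ h (M.obs s) a *
        ∑ s' : S, M.P s a s' * M.reachN σ T n (h ++ [(M.obs s, a)]) s' := by
  rw [reachN_succ, if_neg hs]
  simp only [tsum_fintype]

lemma reachN_le_one (M : POMDP S Act Ω) (σ : Policy Act Ω) (T : Set S) :
    ∀ (n : ℕ) (h : List (Ω × Act)) (s : S), M.reachN σ T n h s ≤ 1 := by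
  intro n
  induction n with
  | zero => intro h s; rw [reachN_zero]; split <;> simp
  | succ n ih =>
    intro h s
    by_cases hs : s ∈ T
    · rw [reachN_of_mem _ _ _ _ _ hs]
    · rw [reachN_succ_of_not_mem _ _ _ _ hs _]
      calc ∑ a : Act, σ h (M.obs s) a *
            ∑ s' : S, M.P s a s' * M.reachN σ T n (h ++ [(M.obs s, a)]) s'
          ≤ ∑ a : Act, σ h (M.obs s) a * 1 := by
            refine Finset.sum_le_sum fun a _ => mul_le_mul_right ?_ _
            calc ∑ s' : S, M.P s a s' * M.reachN σ T n (h ++ [(M.obs s, a)]) s'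
                ≤ ∑ s' : S, M.P s a s' * 1 :=
                  Finset.sum_le_sum fun s' _ => mul_le_mul_right (ih _ _) _
              _ = 1 := by simp [sum_pmf_eq_one]
        _ = 1 := by simp [sum_pmf_eq_one]

lemma reachN_mono_succ (M : POMDP S Act Ω) (σ : Policy Act Ω) (T : Set S) :
    ∀ (n : ℕ) (h : List (Ω × Act)) (s : S),
      M.reachN σ T n h s ≤ M.reachN σ T (n+1) h s := by
  intro n
  induction n with
  | zero =>
    intro h s
    rw [reachN_zero]
    split
    · rw [reachN_of_mem _ _ _ _ _ (by assumption)]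
    · exact zero_le
  | succ n ih =>
    intro h s
    by_cases hs : s ∈ T
    · rw [reachN_of_mem _ _ _ _ _ hs, reachN_of_mem _ _ _ _ _ hs]
    · rw [reachN_succ_of_not_mem _ _ _ _ hs _, reachN_succ_of_not_mem _ _ _ _ hs _]
      refine Finset.sum_le_sum fun a _ => mul_le_mul_right ?_ _
      exact Finset.sum_le_sum fun s' _ => mul_le_mul_right (ih _ _) _

lemma reachN_mono (M : POMDP S Act Ω) (σ : Policy Act Ω) (T : Set S)
    (h : List (Ω × Act)) (s : S) :
    Monotone (fun n => M.reachN σ T n h s) :=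
  monotone_nat_of_le_succ fun n => reachN_mono_succ M σ T n h s

lemma prReach_eq_tsum (M : POMDP S Act Ω) (σ : Policy Act Ω) (T : Set S) (β : PMF S) :
    M.prReach σ T β = ∑' s : S, β s * ⨆ n, M.reachN σ T n [] s := by
  rw [prReach]
  simp only [tsum_fintype]
  have hmono : ∀ s : S, Monotone fun n => β s * M.reachN σ T n [] s :=
    fun s n m hnm => mul_le_mul_right (reachN_mono M σ T [] s hnm) (β s)
  rw [← ENNReal.finsetSum_iSup_of_monotone hmono]
  exact Finset.sum_congr rfl fun s _ => (ENNReal.mul_iSup _ _).symm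

lemma prReach_pure (M : POMDP S Act Ω) (σ : Policy Act Ω) (T : Set S) (s : S) :
    M.prReach σ T (PMF.pure s) = ⨆ n, M.reachN σ T n [] s := by
  rw [prReach]
  exact iSup_congr fun n => tsum_pure_mul s _

/-! ### Per-state characterization of `WinningFromSupport` -/

lemma winningFromSupport_of_perstate (M : POMDP S Act Ω) (REACH AVOID : Set S)
    (σ : Policy Act Ω) (b : Set S)
    (hA : ∀ s ∈ b, (⨆ n, M.reachN σ AVOID n [] s) = 0)
    (hR : ∀ s ∈ b, (⨆ n, M.reachN σ REACH n [] s) = 1) :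
    M.WinningFromSupport REACH AVOID σ b := by
  intro β hsupp
  constructor
  · rw [prReach_eq_tsum]
    rw [ENNReal.tsum_eq_zero]
    intro s
    by_cases hs : s ∈ b
    · rw [hA s hs, mul_zero]
    · have : β s = 0 := by
        by_contra hβ
        exact hs (hsupp ▸ (β.mem_support_iff s).mpr hβ)
      rw [this, zero_mul]
  · rw [prReach_eq_tsum]
    have : ∀ s : S, β s * (⨆ n, M.reachN σ REACH n [] s) = β s := by
      intro s
      by_cases hs : s ∈ b
      · rw [hR s hs, mul_one]
      · have : β s = 0 := by
          by_contra hβ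
          exact hs (hsupp ▸ (β.mem_support_iff s).mpr hβ)
        rw [this, zero_mul]
    rw [tsum_congr this]
    exact β.tsum_coe

lemma perstate_of_winningFromSupport (M : POMDP S Act Ω) (REACH AVOID : Set S)
    (σ : Policy Act Ω) (b : Set S)
    (hwin : M.WinningFromSupport REACH AVOID σ b) :
    ∀ s ∈ b, (⨆ n, M.reachN σ AVOID n [] s) = 0 ∧
      (⨆ n, M.reachN σ REACH n [] s) = 1 := by
  intro s hs
  have hne : b.toFinset.Nonempty := ⟨s, Set.mem_toFinset.mpr hs⟩
  set β : PMF S := PMF.uniformOfFinset b.toFinset hne with hβdef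
  have hβsupp : β.support = b := by
    rw [hβdef, PMF.support_uniformOfFinset]
    exact Set.coe_toFinset b
  obtain ⟨h0, h1⟩ := hwin β hβsupp
  rw [prReach_eq_tsum] at h0 h1
  have hβs : β s ≠ 0 := by
    rw [← PMF.mem_support_iff, hβsupp]; exact hs
  constructor
  · have := ENNReal.tsum_eq_zero.mp h0 s
    exact (mul_eq_zero.mp this).resolve_left hβs
  · by_contra hne1
    have hVle : (⨆ n, M.reachN σ REACH n [] s) ≤ 1 :=
      iSup_le fun n => reachN_le_one M σ REACH n [] s
    have hVlt : (⨆ n, M.reachN σ REACH n [] s) < 1 := lt_of_le_of_ne hVle hne1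
    set V : S → ℝ≥0∞ := fun i => ⨆ n, M.reachN σ REACH n [] i with hV
    have hsplit1 : (∑ i : S, β i * V i)
        = β s * V s + ∑ i ∈ Finset.univ.erase s, β i * V i :=
      (Finset.add_sum_erase _ _ (Finset.mem_univ s)).symm
    have hsplit2 : (∑ i : S, β i) = β s + ∑ i ∈ Finset.univ.erase s, β i :=
      (Finset.add_sum_erase _ _ (Finset.mem_univ s)).symm
    have hRle : (∑ i ∈ Finset.univ.erase s, β i * V i)
        ≤ ∑ i ∈ Finset.univ.erase s, β i := by
      refine Finset.sum_le_sum fun i _ => ?_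
      calc β i * V i ≤ β i * 1 :=
            mul_le_mul_right (iSup_le fun n => reachN_le_one M σ REACH n [] i) _
        _ = β i := mul_one _
    have hRtop : (∑ i ∈ Finset.univ.erase s, β i) ≠ ⊤ := by
      refine ne_top_of_le_ne_top (by simp : (1:ℝ≥0∞) ≠ ⊤) ?_
      calc (∑ i ∈ Finset.univ.erase s, β i) ≤ ∑ i : S, β i :=
            Finset.sum_le_sum_of_subset (Finset.erase_subset _ _)
        _ = 1 := sum_pmf_eq_one β
    have hlt : (∑' i : S, β i * V i) < 1 := by
      rw [tsum_fintype, hsplit1]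
      have h1' : β s * V s < β s := by
        calc β s * V s < β s * 1 :=
              (ENNReal.mul_lt_mul_iff_right hβs (β.apply_ne_top s)).mpr hVlt
          _ = β s := mul_one _
      calc β s * V s + ∑ i ∈ Finset.univ.erase s, β i * V i
          ≤ β s * V s + ∑ i ∈ Finset.univ.erase s, β i := add_le_add_right hRle _
        _ < β s + ∑ i ∈ Finset.univ.erase s, β i :=
            ENNReal.add_lt_add_right hRtop h1'
        _ = ∑ i : S, β i := hsplit2.symm
        _ = 1 := sum_pmf_eq_one β
    rw [h1] at hlt
    exact lt_irrefl _ hlt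

/-! ### Lifting a policy of `M` to the shortcutted POMDP -/

def liftHist (h : List (Ω × Act)) : List (Ω × Option Act) :=
  h.map (fun p => (p.1, some p.2))

def stripHist (h : List (Ω × Option Act)) : List (Ω × Act) :=
  h.filterMap (fun p => p.2.map (fun a => (p.1, a)))

lemma liftHist_append (h : List (Ω × Act)) (ω : Ω) (a : Act) :
    liftHist (h ++ [(ω, a)]) = liftHist h ++ [(ω, some a)] := by
  simp [liftHist]

lemma stripHist_append_some (h : List (Ω × Option Act)) (ω : Ω) (a : Act) :
    stripHist (h ++ [(ω, some a)]) = stripHist h ++ [(ω, a)] := by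
  simp [stripHist]

noncomputable def liftPolicy (π : Policy Act Ω) : Policy (Option Act) Ω :=
  fun h ω => (π (stripHist h) ω).map some

lemma liftPolicy_none (π : Policy Act Ω) (h : List (Ω × Option Act)) (ω : Ω) :
    liftPolicy π h ω none = 0 := by
  simp [liftPolicy, PMF.map_apply]

lemma liftPolicy_some (π : Policy Act Ω) (h : List (Ω × Option Act)) (ω : Ω) (a : Act) :
    liftPolicy π h ω (some a) = π (stripHist h) ω a := by
  rw [liftPolicy, PMF.map_apply, tsum_eq_single a]
  · simp
  · intro b hb
    simp [Option.some_inj, Ne.symm hb]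

lemma shortcut_obs (M : POMDP S Act Ω) (W : Set (Set S)) (top bot : S) :
    (M.shortcut W top bot).obs = M.obs := rfl

lemma shortcut_P_some (M : POMDP S Act Ω) (W : Set (Set S)) (top bot : S)
    (s : S) (a : Act) : (M.shortcut W top bot).P s (some a) = M.P s a := rfl

lemma shortcut_P_none (M : POMDP S Act Ω) (W : Set (Set S)) (top bot : S)
    (s : S) : (M.shortcut W top bot).P s none
      = PMF.pure (if ({s} : Set S) ∈ W then top else bot) := rfl

lemma reachN_shortcut_lift (M : POMDP S Act Ω) (W : Set (Set S)) (top bot : S)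
    (π : Policy Act Ω) (T : Set S) :
    ∀ (n : ℕ) (h : List (Ω × Option Act)) (s : S),
      (M.shortcut W top bot).reachN (liftPolicy π) T n h s
        = M.reachN π T n (stripHist h) s := by
  intro n
  induction n with
  | zero => intro h s; rfl
  | succ n ih =>
    intro h s
    by_cases hs : s ∈ T
    · rw [reachN_of_mem _ _ _ _ _ hs, reachN_of_mem _ _ _ _ _ hs]
    · rw [reachN_succ_of_not_mem _ _ _ _ hs _, reachN_succ_of_not_mem _ _ _ _ hs _]
      rw [sum_option_split]
      rw [liftPolicy_none, zero_mul, zero_add]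
      refine Finset.sum_congr rfl fun a _ => ?_
      rw [liftPolicy_some, shortcut_obs]
      congr 1
      refine Finset.sum_congr rfl fun s' _ => ?_
      rw [shortcut_P_some]
      congr 1
      rw [ih, stripHist_append_some]

lemma prReach_shortcut_lift (M : POMDP S Act Ω) (W : Set (Set S)) (top bot : S)
    (π : Policy Act Ω) (T : Set S) (β : PMF S) :
    (M.shortcut W top bot).prReach (liftPolicy π) T β = M.prReach π T β := by
  rw [prReach, prReach]
  refine iSup_congr fun n => tsum_congr fun s => ?_
  rw [reachN_shortcut_lift]
  rfl

end POMDP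


namespace POMDP

open Finset

set_option linter.unusedSectionVars false

variable {S Act Ω : Type} [Fintype S] [Fintype Act]

lemma fsum_pure_mul (c : S) (f : S → ℝ≥0∞) :
    ∑ s' : S, (PMF.pure c) s' * f s' = f c := by
  rw [← tsum_fintype (L := SummationFilter.unconditional _)]; exact tsum_pure_mul c f

/-! ### Weights of the combined policy -/

noncomputable def w1R (τ : Policy (Option Act) Ω) : List (Ω × Act) → ℝ≥0∞
  | [] => 1
  | p :: t => w1R τ t * τ (liftHist t.reverse) p.1 (some p.2)

noncomputable def wsR (σ : Policy Act Ω) (τ : Policy (Option Act) Ω) :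
    List (Ω × Act) → ℕ → ℝ≥0∞
  | [], _ => 0
  | p :: t, j =>
    if j = t.length then w1R τ t * τ (liftHist t.reverse) p.1 none * σ [] p.1 p.2
    else wsR σ τ t j * σ (t.reverse.drop j) p.1 p.2

noncomputable def NW (σ : Policy Act Ω) (τ : Policy (Option Act) Ω)
    (h : List (Ω × Act)) : ℝ≥0∞ :=
  w1R τ h.reverse + ∑ j ∈ Finset.range h.length, wsR σ τ h.reverse j

noncomputable def numer (σ : Policy Act Ω) (τ : Policy (Option Act) Ω)
    (h : List (Ω × Act)) (ω : Ω) (a : Act) : ℝ≥0∞ :=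
  w1R τ h.reverse * (τ (liftHist h) ω (some a) + τ (liftHist h) ω none * σ [] ω a)
    + ∑ j ∈ Finset.range h.length, wsR σ τ h.reverse j * σ (h.drop j) ω a

lemma w1R_snoc (τ : Policy (Option Act) Ω) (h : List (Ω × Act)) (ω : Ω) (a : Act) :
    w1R τ ((h ++ [(ω, a)]).reverse) = w1R τ h.reverse * τ (liftHist h) ω (some a) := by
  have hrev : (h ++ [(ω, a)]).reverse = (ω, a) :: h.reverse := by simp
  rw [hrev, w1R, List.reverse_reverse]

lemma wsR_snoc_lt (σ : Policy Act Ω) (τ : Policy (Option Act) Ω)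
    (h : List (Ω × Act)) (ω : Ω) (a : Act) {j : ℕ} (hj : j < h.length) :
    wsR σ τ ((h ++ [(ω, a)]).reverse) j = wsR σ τ h.reverse j * σ (h.drop j) ω a := by
  have hrev : (h ++ [(ω, a)]).reverse = (ω, a) :: h.reverse := by simp
  rw [hrev, wsR, if_neg (by rw [List.length_reverse]; omega), List.reverse_reverse]

lemma wsR_snoc_eq (σ : Policy Act Ω) (τ : Policy (Option Act) Ω)
    (h : List (Ω × Act)) (ω : Ω) (a : Act) :
    wsR σ τ ((h ++ [(ω, a)]).reverse) h.length
      = w1R τ h.reverse * τ (liftHist h) ω none * σ [] ω a := by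
  have hrev : (h ++ [(ω, a)]).reverse = (ω, a) :: h.reverse := by simp
  rw [hrev, wsR, if_pos List.length_reverse.symm, List.reverse_reverse]

lemma w1R_le_one (τ : Policy (Option Act) Ω) : ∀ l : List (Ω × Act), w1R τ l ≤ 1
  | [] => le_rfl
  | p :: t => by
    rw [w1R]
    exact mul_le_one' (w1R_le_one τ t) (PMF.coe_le_one _ _)

lemma wsR_le_one (σ : Policy Act Ω) (τ : Policy (Option Act) Ω) :
    ∀ (l : List (Ω × Act)) (j : ℕ), wsR σ τ l j ≤ 1
  | [], _ => by rw [wsR]; exact zero_le_one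
  | p :: t, j => by
    rw [wsR]
    split
    · exact mul_le_one' (mul_le_one' (w1R_le_one τ t) (PMF.coe_le_one _ _))
        (PMF.coe_le_one _ _)
    · exact mul_le_one' (wsR_le_one σ τ t j) (PMF.coe_le_one _ _)

lemma NW_ne_top (σ : Policy Act Ω) (τ : Policy (Option Act) Ω)
    (h : List (Ω × Act)) : NW σ τ h ≠ ⊤ := by
  rw [NW]
  refine ENNReal.add_ne_top.mpr ⟨?_, ?_⟩
  · exact ne_top_of_le_ne_top (by simp) (w1R_le_one τ _)
  · refine ne_top_of_le_ne_top ?_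
      (Finset.sum_le_sum fun j _ => wsR_le_one σ τ _ j)
    simp

lemma NW_append (σ : Policy Act Ω) (τ : Policy (Option Act) Ω)
    (h : List (Ω × Act)) (ω : Ω) (a : Act) :
    NW σ τ (h ++ [(ω, a)]) = numer σ τ h ω a := by
  rw [NW, numer, List.length_append]
  simp only [List.length_cons, List.length_nil, Nat.zero_add]
  rw [Finset.sum_range_succ, w1R_snoc, wsR_snoc_eq]
  rw [Finset.sum_congr rfl fun j hj =>
    wsR_snoc_lt σ τ h ω a (Finset.mem_range.mp hj)]
  ring

lemma sum_numer (σ : Policy Act Ω) (τ : Policy (Option Act) Ω)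
    (h : List (Ω × Act)) (ω : Ω) :
    ∑ a : Act, numer σ τ h ω a = NW σ τ h := by
  rw [NW]
  simp only [numer]
  rw [Finset.sum_add_distrib]
  congr 1
  · rw [← Finset.mul_sum, Finset.sum_add_distrib, ← Finset.mul_sum, sum_pmf_eq_one,
      mul_one]
    have h1 : (∑ a : Act, τ (liftHist h) ω (some a)) + τ (liftHist h) ω none = 1 := by
      have := sum_pmf_eq_one (τ (liftHist h) ω)
      rw [sum_option_split] at this
      rw [add_comm]
      exact this
    rw [h1, mul_one]
  · rw [Finset.sum_comm]
    refine Finset.sum_congr rfl fun j _ => ?_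
    rw [← Finset.mul_sum, sum_pmf_eq_one, mul_one]

/-! ### The combined policy -/

noncomputable def comb (σ : Policy Act Ω) (τ : Policy (Option Act) Ω) : Policy Act Ω :=
  fun h ω =>
    if hN : NW σ τ h = 0 then σ h ω
    else PMF.ofFintype (fun a => numer σ τ h ω a / NW σ τ h) (by
      simp only [div_eq_mul_inv, ← Finset.sum_mul]
      rw [sum_numer, ← div_eq_mul_inv, ENNReal.div_self hN (NW_ne_top σ τ h)])

lemma NW_eq_zero_append (σ : Policy Act Ω) (τ : Policy (Option Act) Ω)
    (h : List (Ω × Act)) (ω : Ω) (a : Act) (h0 : NW σ τ h = 0) :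
    NW σ τ (h ++ [(ω, a)]) = 0 := by
  rw [NW_append, numer]
  rw [NW] at h0
  obtain ⟨h1, h2⟩ := add_eq_zero.mp h0
  rw [h1, zero_mul, zero_add]
  refine Finset.sum_eq_zero fun j hj => ?_
  rw [Finset.sum_eq_zero_iff.mp h2 j hj, zero_mul]

lemma NW_mul_comb (σ : Policy Act Ω) (τ : Policy (Option Act) Ω)
    (h : List (Ω × Act)) (ω : Ω) (a : Act) :
    NW σ τ h * comb σ τ h ω a = NW σ τ (h ++ [(ω, a)]) := by
  by_cases h0 : NW σ τ h = 0
  · rw [h0, zero_mul, NW_eq_zero_append σ τ h ω a h0]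
  · simp only [comb]
    rw [dif_neg h0, PMF.ofFintype_apply,
      ENNReal.mul_div_cancel h0 (NW_ne_top σ τ h), NW_append]

/-! ### Mode value functions -/

noncomputable def AVal (M : POMDP S Act Ω) (σ : Policy Act Ω)
    (τ : Policy (Option Act) Ω) (T : Set S) : ℕ → List (Ω × Act) → S → ℝ≥0∞
  | 0, _, s => if s ∈ T then 1 else 0
  | n+1, h, s =>
    if s ∈ T then 1
    else (∑ a : Act, τ (liftHist h) (M.obs s) (some a) *
            ∑ s' : S, M.P s a s' * AVal M σ τ T n (h ++ [(M.obs s, a)]) s')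
      + τ (liftHist h) (M.obs s) none * M.reachN σ T (n+1) [] s

lemma AVal_zero (M : POMDP S Act Ω) (σ : Policy Act Ω) (τ : Policy (Option Act) Ω)
    (T : Set S) (h : List (Ω × Act)) (s : S) :
    AVal M σ τ T 0 h s = if s ∈ T then 1 else 0 := rfl

lemma AVal_succ (M : POMDP S Act Ω) (σ : Policy Act Ω) (τ : Policy (Option Act) Ω)
    (T : Set S) (n : ℕ) (h : List (Ω × Act)) (s : S) :
    AVal M σ τ T (n+1) h s = if s ∈ T then 1
    else (∑ a : Act, τ (liftHist h) (M.obs s) (some a) *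
            ∑ s' : S, M.P s a s' * AVal M σ τ T n (h ++ [(M.obs s, a)]) s')
      + τ (liftHist h) (M.obs s) none * M.reachN σ T (n+1) [] s := rfl

lemma AVal_of_mem (M : POMDP S Act Ω) (σ : Policy Act Ω) (τ : Policy (Option Act) Ω)
    (T : Set S) (n : ℕ) (h : List (Ω × Act)) {s : S} (hs : s ∈ T) :
    AVal M σ τ T n h s = 1 := by
  cases n <;> simp [AVal_zero, AVal_succ, hs]

noncomputable def A2 (M : POMDP S Act Ω) (σ : Policy Act Ω)
    (τ : Policy (Option Act) Ω) (T : Set S) : ℕ → ℕ → List (Ω × Act) → S → ℝ≥0∞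
  | 0, _, _, s => if s ∈ T then 1 else 0
  | n+1, m, h, s =>
    if s ∈ T then 1
    else (∑ a : Act, τ (liftHist h) (M.obs s) (some a) *
            ∑ s' : S, M.P s a s' * A2 M σ τ T n m (h ++ [(M.obs s, a)]) s')
      + τ (liftHist h) (M.obs s) none * M.reachN σ T m [] s

lemma A2_zero (M : POMDP S Act Ω) (σ : Policy Act Ω) (τ : Policy (Option Act) Ω)
    (T : Set S) (m : ℕ) (h : List (Ω × Act)) (s : S) :
    A2 M σ τ T 0 m h s = if s ∈ T then 1 else 0 := rfl

lemma A2_succ (M : POMDP S Act Ω) (σ : Policy Act Ω) (τ : Policy (Option Act) Ω)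
    (T : Set S) (n m : ℕ) (h : List (Ω × Act)) (s : S) :
    A2 M σ τ T (n+1) m h s = if s ∈ T then 1
    else (∑ a : Act, τ (liftHist h) (M.obs s) (some a) *
            ∑ s' : S, M.P s a s' * A2 M σ τ T n m (h ++ [(M.obs s, a)]) s')
      + τ (liftHist h) (M.obs s) none * M.reachN σ T m [] s := rfl

lemma A2_of_mem (M : POMDP S Act Ω) (σ : Policy Act Ω) (τ : Policy (Option Act) Ω)
    (T : Set S) (n m : ℕ) (h : List (Ω × Act)) {s : S} (hs : s ∈ T) :
    A2 M σ τ T n m h s = 1 := by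
  cases n <;> simp [A2_zero, A2_succ, hs]

lemma A2_mono (M : POMDP S Act Ω) (σ : Policy Act Ω) (τ : Policy (Option Act) Ω)
    (T : Set S) : ∀ (n : ℕ) (h : List (Ω × Act)) (s : S),
      Monotone fun m => A2 M σ τ T n m h s := by
  intro n
  induction n with
  | zero => intro h s m m' _; simp only [A2_zero]; exact le_rfl
  | succ n ih =>
    intro h s m m' hm
    simp only [A2_succ]
    split_ifs with hsT
    · exact le_rfl
    · exact add_le_add
        (Finset.sum_le_sum fun a _ => mul_le_mul_right
          (Finset.sum_le_sum fun s' _ => mul_le_mul_right (ih _ _ hm) _) _)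
        (mul_le_mul_right (reachN_mono M σ T [] s hm) _)

lemma A2_le_AVal (M : POMDP S Act Ω) (σ : Policy Act Ω) (τ : Policy (Option Act) Ω)
    (T : Set S) : ∀ (n m : ℕ) (h : List (Ω × Act)) (s : S),
      A2 M σ τ T n m h s ≤ AVal M σ τ T (n + m) h s := by
  intro n
  induction n with
  | zero =>
    intro m h s
    rw [A2_zero]
    split
    · rw [AVal_of_mem _ _ _ _ _ _ (by assumption)]
    · exact zero_le
  | succ n ih =>
    intro m h s
    by_cases hs : s ∈ T
    · rw [A2_of_mem _ _ _ _ _ _ _ hs, AVal_of_mem _ _ _ _ _ _ hs]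
    · have harith : n + 1 + m = (n + m) + 1 := by omega
      rw [A2_succ, if_neg hs, harith, AVal_succ, if_neg hs]
      refine add_le_add ?_ ?_
      · exact Finset.sum_le_sum fun a _ => mul_le_mul_right
          (Finset.sum_le_sum fun s' _ => mul_le_mul_right (ih m _ s') _) _
      · exact mul_le_mul_right (reachN_mono M σ T [] s (by omega)) _

/-! ### Auxiliary sum rewriting for the master lemma -/

lemma sum_wsR_snoc (σ : Policy Act Ω) (τ : Policy (Option Act) Ω)
    (h : List (Ω × Act)) (ω : Ω) (a : Act) (F : List (Ω × Act) → ℝ≥0∞) :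
    ∑ j ∈ Finset.range h.length,
        wsR σ τ ((h ++ [(ω, a)]).reverse) j * F ((h ++ [(ω, a)]).drop j)
      = ∑ j ∈ Finset.range h.length,
          wsR σ τ h.reverse j * σ (h.drop j) ω a * F (h.drop j ++ [(ω, a)]) :=
  Finset.sum_congr rfl fun j hj => by
    rw [wsR_snoc_lt σ τ h ω a (Finset.mem_range.mp hj),
      List.drop_append_of_le_length (Nat.le_of_lt (Finset.mem_range.mp hj))]

/-! ### The master lemma -/

lemma master (M : POMDP S Act Ω) (σ : Policy Act Ω) (τ : Policy (Option Act) Ω)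
    (T : Set S) : ∀ (n : ℕ) (h : List (Ω × Act)) (s : S),
    M.reachN (comb σ τ) T n h s * NW σ τ h
      = w1R τ h.reverse * AVal M σ τ T n h s
        + ∑ j ∈ Finset.range h.length,
            wsR σ τ h.reverse j * M.reachN σ T n (h.drop j) s := by
  intro n
  induction n with
  | zero =>
    intro h s
    by_cases hsT : s ∈ T
    · rw [reachN_zero, if_pos hsT, AVal_zero, if_pos hsT, one_mul, mul_one, NW]
      congr 1
      refine Finset.sum_congr rfl fun j _ => ?_
      rw [reachN_zero, if_pos hsT, mul_one]
    · rw [reachN_zero, if_neg hsT, AVal_zero, if_neg hsT, zero_mul, mul_zero, zero_add]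
      refine (Finset.sum_eq_zero fun j _ => ?_).symm
      rw [reachN_zero, if_neg hsT, mul_zero]
  | succ n ih =>
    intro h s
    by_cases hs : s ∈ T
    · rw [reachN_of_mem _ _ _ _ _ hs, AVal_of_mem _ _ _ _ _ _ hs, one_mul, mul_one, NW]
      congr 1
      refine Finset.sum_congr rfl fun j _ => ?_
      rw [reachN_of_mem _ _ _ _ _ hs, mul_one]
    · have key : ∀ a : Act,
          (comb σ τ h (M.obs s) a * ∑ s' : S, M.P s a s' *
              M.reachN (comb σ τ) T n (h ++ [(M.obs s, a)]) s') * NW σ τ h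
          = ∑ s' : S, M.P s a s' *
              (w1R τ h.reverse * τ (liftHist h) (M.obs s) (some a) *
                  AVal M σ τ T n (h ++ [(M.obs s, a)]) s'
               + (∑ j ∈ Finset.range h.length,
                   wsR σ τ h.reverse j * σ (h.drop j) (M.obs s) a *
                     M.reachN σ T n (h.drop j ++ [(M.obs s, a)]) s')
               + w1R τ h.reverse * τ (liftHist h) (M.obs s) none * σ [] (M.obs s) a *
                   M.reachN σ T n [(M.obs s, a)] s') := by
        intro a
        have e1 : (comb σ τ h (M.obs s) a * ∑ s' : S, M.P s a s' *
              M.reachN (comb σ τ) T n (h ++ [(M.obs s, a)]) s') * NW σ τ h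
            = NW σ τ (h ++ [(M.obs s, a)]) * ∑ s' : S, M.P s a s' *
                M.reachN (comb σ τ) T n (h ++ [(M.obs s, a)]) s' := by
          rw [← NW_mul_comb σ τ h (M.obs s) a]; ring
        rw [e1, Finset.mul_sum]
        refine Finset.sum_congr rfl fun s' _ => ?_
        have e2 : NW σ τ (h ++ [(M.obs s, a)]) *
              (M.P s a s' * M.reachN (comb σ τ) T n (h ++ [(M.obs s, a)]) s')
            = M.P s a s' * (M.reachN (comb σ τ) T n (h ++ [(M.obs s, a)]) s' *
                NW σ τ (h ++ [(M.obs s, a)])) := by ring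
        rw [e2, ih (h ++ [(M.obs s, a)]) s', List.length_append]
        simp only [List.length_cons, List.length_nil, Nat.zero_add]
        rw [Finset.sum_range_succ, w1R_snoc, wsR_snoc_eq, List.drop_left,
          sum_wsR_snoc σ τ h (M.obs s) a (fun l => M.reachN σ T n l s')]
        ring
      rw [reachN_succ_of_not_mem M (comb σ τ) T n hs h, Finset.sum_mul,
        Finset.sum_congr rfl fun a _ => key a, AVal_succ, if_neg hs]
      simp only [reachN_succ_of_not_mem M σ T n hs]
      -- component equalities
      have comp1 :
          w1R τ h.reverse * ∑ a : Act, τ (liftHist h) (M.obs s) (some a) *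
              ∑ s' : S, M.P s a s' * AVal M σ τ T n (h ++ [(M.obs s, a)]) s'
          = ∑ a : Act, ∑ s' : S, M.P s a s' *
              (w1R τ h.reverse * τ (liftHist h) (M.obs s) (some a) *
                AVal M σ τ T n (h ++ [(M.obs s, a)]) s') := by
        simp only [Finset.mul_sum]
        exact Finset.sum_congr rfl fun a _ => Finset.sum_congr rfl fun s' _ => by ring
      have comp2 :
          (∑ j ∈ Finset.range h.length, wsR σ τ h.reverse j *
              ∑ a : Act, σ (h.drop j) (M.obs s) a *
                ∑ s' : S, M.P s a s' * M.reachN σ T n (h.drop j ++ [(M.obs s, a)]) s')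
          = ∑ a : Act, ∑ s' : S, M.P s a s' *
              (∑ j ∈ Finset.range h.length,
                wsR σ τ h.reverse j * σ (h.drop j) (M.obs s) a *
                  M.reachN σ T n (h.drop j ++ [(M.obs s, a)]) s') := by
        simp only [Finset.mul_sum]
        rw [Finset.sum_comm]
        refine Finset.sum_congr rfl fun a _ => ?_
        rw [Finset.sum_comm]
        exact Finset.sum_congr rfl fun s' _ => Finset.sum_congr rfl fun j _ => by ring
      have comp3 :
          w1R τ h.reverse * (τ (liftHist h) (M.obs s) none *
            ∑ a : Act, σ [] (M.obs s) a *
              ∑ s' : S, M.P s a s' * M.reachN σ T n ([] ++ [(M.obs s, a)]) s')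
          = ∑ a : Act, ∑ s' : S, M.P s a s' *
              (w1R τ h.reverse * τ (liftHist h) (M.obs s) none * σ [] (M.obs s) a *
                M.reachN σ T n [(M.obs s, a)] s') := by
        simp only [List.nil_append, Finset.mul_sum]
        exact Finset.sum_congr rfl fun a _ => Finset.sum_congr rfl fun s' _ => by ring
      calc ∑ a : Act, ∑ s' : S, M.P s a s' *
              (w1R τ h.reverse * τ (liftHist h) (M.obs s) (some a) *
                  AVal M σ τ T n (h ++ [(M.obs s, a)]) s'
               + (∑ j ∈ Finset.range h.length,
                   wsR σ τ h.reverse j * σ (h.drop j) (M.obs s) a *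
                     M.reachN σ T n (h.drop j ++ [(M.obs s, a)]) s')
               + w1R τ h.reverse * τ (liftHist h) (M.obs s) none * σ [] (M.obs s) a *
                   M.reachN σ T n [(M.obs s, a)] s')
          = (∑ a : Act, ∑ s' : S, M.P s a s' *
              (w1R τ h.reverse * τ (liftHist h) (M.obs s) (some a) *
                AVal M σ τ T n (h ++ [(M.obs s, a)]) s'))
            + (∑ a : Act, ∑ s' : S, M.P s a s' *
              (∑ j ∈ Finset.range h.length,
                wsR σ τ h.reverse j * σ (h.drop j) (M.obs s) a *
                  M.reachN σ T n (h.drop j ++ [(M.obs s, a)]) s'))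
            + (∑ a : Act, ∑ s' : S, M.P s a s' *
              (w1R τ h.reverse * τ (liftHist h) (M.obs s) none * σ [] (M.obs s) a *
                M.reachN σ T n [(M.obs s, a)] s')) := by
            simp only [mul_add, Finset.sum_add_distrib]
        _ = w1R τ h.reverse *
              ((∑ a : Act, τ (liftHist h) (M.obs s) (some a) *
                  ∑ s' : S, M.P s a s' * AVal M σ τ T n (h ++ [(M.obs s, a)]) s')
               + τ (liftHist h) (M.obs s) none *
                  ∑ a : Act, σ [] (M.obs s) a *
                    ∑ s' : S, M.P s a s' * M.reachN σ T n ([] ++ [(M.obs s, a)]) s')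
            + ∑ j ∈ Finset.range h.length, wsR σ τ h.reverse j *
                ∑ a : Act, σ (h.drop j) (M.obs s) a *
                  ∑ s' : S, M.P s a s' * M.reachN σ T n (h.drop j ++ [(M.obs s, a)]) s' := by
            rw [mul_add, comp1, comp2, comp3]; ring

end POMDP


namespace POMDP

open Finset

set_option linter.unusedSectionVars false

variable {S Act Ω : Type} [Fintype S] [Fintype Act]

/-! ### Comparison lemmas -/

lemma AVal_le_shortcut (M : POMDP S Act Ω) (σ : Policy Act Ω)
    (τ : Policy (Option Act) Ω) (W : Set (Set S)) (top bot : S) (T : Set S)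
    (hbotT : bot ∈ T)
    (hWT : ∀ s : S, ({s} : Set S) ∈ W → (⨆ m, M.reachN σ T m [] s) = 0) :
    ∀ (n : ℕ) (h : List (Ω × Act)) (s : S),
      AVal M σ τ T n h s ≤ (M.shortcut W top bot).reachN τ T n (liftHist h) s := by
  intro n
  induction n with
  | zero =>
    intro h s
    rw [AVal_zero, reachN_zero]
  | succ n ih =>
    intro h s
    by_cases hs : s ∈ T
    · rw [AVal_of_mem _ _ _ _ _ _ hs, reachN_of_mem _ _ _ _ _ hs]
    · rw [AVal_succ, if_neg hs,
        reachN_succ_of_not_mem (M.shortcut W top bot) τ T n hs (liftHist h),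
        sum_option_split]
      simp only [shortcut_obs, shortcut_P_some, shortcut_P_none]
      refine le_trans (le_of_eq (add_comm _ _)) (add_le_add ?_ ?_)
      · by_cases hsW : ({s} : Set S) ∈ W
        · have h0 : M.reachN σ T (n+1) [] s = 0 :=
            le_antisymm (le_trans (le_iSup (fun m => M.reachN σ T m [] s) (n+1))
              (hWT s hsW).le) (zero_le)
          rw [h0, mul_zero]
          exact zero_le
        · rw [if_neg hsW, fsum_pure_mul, reachN_of_mem _ _ _ _ _ hbotT]
          exact mul_le_mul_right (reachN_le_one M σ T (n+1) [] s) _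
      · refine Finset.sum_le_sum fun a _ => mul_le_mul_right ?_ _
        refine Finset.sum_le_sum fun s' _ => mul_le_mul_right ?_ _
        rw [← liftHist_append]
        exact ih _ _

lemma shortcut_reachN_bot (M : POMDP S Act Ω) (τ : Policy (Option Act) Ω)
    (W : Set (Set S)) (top bot : S) (T : Set S)
    (hbotT : bot ∉ T) (habs : ∀ a, M.P bot a = PMF.pure bot)
    (hbotW : ({bot} : Set S) ∉ W) :
    ∀ (n : ℕ) (h : List (Ω × Option Act)),
      (M.shortcut W top bot).reachN τ T n h bot = 0 := by
  intro n
  induction n with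
  | zero => intro h; rw [reachN_zero, if_neg hbotT]
  | succ n ih =>
    intro h
    rw [reachN_succ_of_not_mem _ _ _ _ hbotT _]
    refine Finset.sum_eq_zero fun α _ => ?_
    rcases α with _ | a
    · rw [shortcut_P_none, if_neg hbotW, fsum_pure_mul, ih, mul_zero]
    · rw [shortcut_P_some, habs a, fsum_pure_mul, ih, mul_zero]

lemma shortcut_le_iSup_A2 (M : POMDP S Act Ω) (σ : Policy Act Ω)
    (τ : Policy (Option Act) Ω) (W : Set (Set S)) (top bot : S) (T : Set S)
    (htopT : top ∈ T) (hbotT : bot ∉ T) (habs : ∀ a, M.P bot a = PMF.pure bot)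
    (hbotW : ({bot} : Set S) ∉ W)
    (hWT : ∀ s : S, ({s} : Set S) ∈ W → (⨆ m, M.reachN σ T m [] s) = 1) :
    ∀ (n : ℕ) (h : List (Ω × Act)) (s : S),
      (M.shortcut W top bot).reachN τ T n (liftHist h) s
        ≤ ⨆ m, A2 M σ τ T n m h s := by
  intro n
  induction n with
  | zero =>
    intro h s
    refine le_iSup_of_le 0 ?_
    rw [reachN_zero, A2_zero]
  | succ n ih =>
    intro h s
    by_cases hs : s ∈ T
    · rw [reachN_of_mem _ _ _ _ _ hs]
      exact le_iSup_of_le 0 (A2_of_mem M σ τ T (n+1) 0 h hs).ge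
    · have hmono_a : ∀ a : Act, Monotone fun m =>
          τ (liftHist h) (M.obs s) (some a) *
            ∑ s' : S, M.P s a s' * A2 M σ τ T n m (h ++ [(M.obs s, a)]) s' :=
        fun a m m' hm => mul_le_mul_right
          (Finset.sum_le_sum fun s' _ => mul_le_mul_right (A2_mono M σ τ T n _ _ hm) _) _
      have hmono1 : Monotone fun m => ∑ a : Act, τ (liftHist h) (M.obs s) (some a) *
          ∑ s' : S, M.P s a s' * A2 M σ τ T n m (h ++ [(M.obs s, a)]) s' :=
        fun m m' hm => Finset.sum_le_sum fun a _ => hmono_a a hm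
      have hmono2 : Monotone fun m =>
          τ (liftHist h) (M.obs s) none * M.reachN σ T m [] s :=
        fun m m' hm => mul_le_mul_right (reachN_mono M σ T [] s hm) _
      have hrw : (⨆ m, A2 M σ τ T (n+1) m h s)
          = (⨆ m, ∑ a : Act, τ (liftHist h) (M.obs s) (some a) *
              ∑ s' : S, M.P s a s' * A2 M σ τ T n m (h ++ [(M.obs s, a)]) s')
            + ⨆ m, τ (liftHist h) (M.obs s) none * M.reachN σ T m [] s := by
        simp only [A2_succ, hs, if_false]
        exact (ENNReal.iSup_add_iSup_of_monotone hmono1 hmono2).symm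
      rw [reachN_succ_of_not_mem _ _ _ _ hs _, sum_option_split, hrw]
      simp only [shortcut_obs, shortcut_P_some, shortcut_P_none]
      refine le_trans (le_of_eq (add_comm _ _)) (add_le_add ?_ ?_)
      · rw [← ENNReal.finsetSum_iSup_of_monotone hmono_a]
        refine Finset.sum_le_sum fun a _ => ?_
        rw [← ENNReal.mul_iSup]
        refine mul_le_mul_right ?_ _
        have hmono_s : ∀ s' : S, Monotone fun m =>
            M.P s a s' * A2 M σ τ T n m (h ++ [(M.obs s, a)]) s' :=
          fun s' m m' hm => mul_le_mul_right (A2_mono M σ τ T n _ _ hm) _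
        rw [← ENNReal.finsetSum_iSup_of_monotone hmono_s]
        refine Finset.sum_le_sum fun s' _ => ?_
        rw [← ENNReal.mul_iSup]
        refine mul_le_mul_right ?_ _
        rw [← liftHist_append]
        exact ih _ _
      · by_cases hsW : ({s} : Set S) ∈ W
        · rw [if_pos hsW, fsum_pure_mul, reachN_of_mem _ _ _ _ _ htopT,
            ← ENNReal.mul_iSup, hWT s hsW]
        · rw [if_neg hsW, fsum_pure_mul,
            shortcut_reachN_bot M τ W top bot T hbotT habs hbotW n _, mul_zero]
          exact zero_le

end POMDP


/-- For a POMDP `M` and a policy `σ` with associated winning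
region `W` (exactly the belief supports from which `σ` is winning), the winning
belief supports of the shortcutted POMDP `M{σ}` coincide with those of `M`. -/
theorem shortcut_winning_iff {S Act Ω : Type} [Fintype S] [Fintype Act]
    (M : POMDP S Act Ω) (REACH AVOID : Set S)
    (hdisj : Disjoint REACH AVOID)
    (hR : M.Absorbing REACH) (hA : M.Absorbing AVOID)
    (top bot : S) (htop : top ∈ REACH) (hbot : bot ∈ AVOID)
    (σ : POMDP.Policy Act Ω) (W : Set (Set S))
    (hW : ∀ b : Set S, b ∈ W ↔
      (M.IsBeliefSupport b ∧ M.WinningFromSupport REACH AVOID σ b)) :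
    ∀ b : Set S,
      (M.shortcut W top bot).WinningSupport REACH AVOID b ↔
        M.WinningSupport REACH AVOID b := by
  intro b
  constructor
  · rintro ⟨τ, hτ⟩
    have hbotR : bot ∉ REACH := fun hmem => Set.disjoint_left.mp hdisj hmem hbot
    have habs : ∀ a, M.P bot a = PMF.pure bot := fun a => hA bot hbot a
    have hbotW : ({bot} : Set S) ∉ W := by
      intro hmem
      have hper := POMDP.perstate_of_winningFromSupport M REACH AVOID σ {bot}
        ((hW {bot}).mp hmem).2 bot rfl
      have h1 : (1 : ℝ≥0∞) ≤ ⨆ n, M.reachN σ AVOID n [] bot := by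
        refine le_trans ?_ (le_iSup _ 0)
        rw [POMDP.reachN_zero, if_pos hbot]
      rw [hper.1] at h1
      exact absurd h1 (by simp)
    have hWA : ∀ s : S, ({s} : Set S) ∈ W → (⨆ m, M.reachN σ AVOID m [] s) = 0 :=
      fun s hsW => (POMDP.perstate_of_winningFromSupport M REACH AVOID σ {s}
        ((hW {s}).mp hsW).2 s rfl).1
    have hWR : ∀ s : S, ({s} : Set S) ∈ W → (⨆ m, M.reachN σ REACH m [] s) = 1 :=
      fun s hsW => (POMDP.perstate_of_winningFromSupport M REACH AVOID σ {s}
        ((hW {s}).mp hsW).2 s rfl).2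
    have hps := POMDP.perstate_of_winningFromSupport (M.shortcut W top bot)
      REACH AVOID τ b hτ
    have hid : ∀ (T : Set S) (n : ℕ) (s : S),
        M.reachN (POMDP.comb σ τ) T n [] s = POMDP.AVal M σ τ T n [] s := by
      intro T n s
      have h := POMDP.master M σ τ T n [] s
      simpa [POMDP.NW, POMDP.w1R] using h
    refine ⟨POMDP.comb σ τ,
      POMDP.winningFromSupport_of_perstate M REACH AVOID (POMDP.comb σ τ) b ?_ ?_⟩
    · intro s hs
      obtain ⟨h0, _⟩ := hps s hs
      refine le_antisymm ?_ (zero_le)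
      rw [← h0]
      refine iSup_mono fun n => ?_
      rw [hid]
      have h2 := POMDP.AVal_le_shortcut M σ τ W top bot AVOID hbot hWA n [] s
      simpa [POMDP.liftHist] using h2
    · intro s hs
      obtain ⟨_, h1⟩ := hps s hs
      refine le_antisymm
        (iSup_le fun n => POMDP.reachN_le_one M (POMDP.comb σ τ) REACH n [] s) ?_
      rw [← h1]
      refine iSup_le fun n => ?_
      have hstep : (M.shortcut W top bot).reachN τ REACH n [] s
          ≤ ⨆ m, POMDP.A2 M σ τ REACH n m [] s := by
        have h2 := POMDP.shortcut_le_iSup_A2 M σ τ W top bot REACH htop hbotR habs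
          hbotW hWR n [] s
        simpa [POMDP.liftHist] using h2
      refine le_trans hstep (iSup_le fun m => ?_)
      refine le_trans (POMDP.A2_le_AVal M σ τ REACH n m [] s) ?_
      rw [← hid]
      exact le_iSup (fun k => M.reachN (POMDP.comb σ τ) REACH k [] s) (n + m)
  · rintro ⟨π, hπ⟩
    refine ⟨POMDP.liftPolicy π, fun β hβ => ?_⟩
    obtain ⟨h0, h1⟩ := hπ β hβ
    constructor
    · rw [POMDP.prReach_shortcut_lift]; exact h0
    · rw [POMDP.prReach_shortcut_lift]; exact h1
end

section
/- In a POMDP, reach-avoid specifications with REACH and AVOID absorbing: if there is a memoryless deterministic observation-based policy σ such that the set C of states reachable under σ from the initial belief support b₀ satisfies (i) C ∩ AVOID = ∅, (ii) C is closed under σ-successors, and (iii) every state in C admits a real-valued ranking r with r(s) > r(s') for some σ-successor s' whenever s ∉ REACH, then σ is winning from b₀. -/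
open scoped ENNReal Classical

namespace MLAux

variable {S Act Ω : Type}

/-- History-independent n-step reach probability for a memoryless policy. -/
noncomputable def auxF (M : POMDP S Act Ω) (σ : Ω → Act) (T : Set S) : ℕ → S → ℝ≥0∞
  | 0, s => if s ∈ T then 1 else 0
  | n + 1, s => if s ∈ T then 1
      else ∑' s' : S, M.P s (σ (M.obs s)) s' * auxF M σ T n s'

/-- n-step non-reach probability. -/
noncomputable def auxG (M : POMDP S Act Ω) (σ : Ω → Act) (T : Set S) : ℕ → S → ℝ≥0∞
  | 0, s => if s ∈ T then 0 else 1
  | n + 1, s => if s ∈ T then 0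
      else ∑' s' : S, M.P s (σ (M.obs s)) s' * auxG M σ T n s'

variable (M : POMDP S Act Ω) (σ : Ω → Act) (T : Set S)

lemma reachN_eq_auxF : ∀ n (h : List (Ω × Act)) (s : S),
    M.reachN (fun _ z => PMF.pure (σ z)) T n h s = auxF M σ T n s := by
  intro n
  induction n with
  | zero => intro h s; rfl
  | succ n ih =>
    intro h s
    by_cases hs : s ∈ T
    · simp [POMDP.reachN, auxF, hs]
    · simp only [POMDP.reachN, auxF, if_neg hs]
      rw [tsum_eq_single (σ (M.obs s))
        (fun b hb => by simp [PMF.pure_apply, hb])]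
      rw [PMF.pure_apply_self, one_mul]
      exact tsum_congr fun s' => by rw [ih]

lemma auxF_le_one : ∀ n s, auxF M σ T n s ≤ 1 := by
  intro n
  induction n with
  | zero => intro s; by_cases h : s ∈ T <;> simp [auxF, h]
  | succ n ih =>
    intro s
    by_cases h : s ∈ T
    · simp [auxF, h]
    · simp only [auxF, if_neg h]
      calc ∑' s' : S, M.P s (σ (M.obs s)) s' * auxF M σ T n s'
          ≤ ∑' s' : S, M.P s (σ (M.obs s)) s' * 1 :=
            ENNReal.tsum_le_tsum fun s' => mul_le_mul_right (ih s') _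
        _ = 1 := by simp [(M.P s (σ (M.obs s))).tsum_coe]

lemma auxG_le_one : ∀ n s, auxG M σ T n s ≤ 1 := by
  intro n
  induction n with
  | zero => intro s; by_cases h : s ∈ T <;> simp [auxG, h]
  | succ n ih =>
    intro s
    by_cases h : s ∈ T
    · simp [auxG, h]
    · simp only [auxG, if_neg h]
      calc ∑' s' : S, M.P s (σ (M.obs s)) s' * auxG M σ T n s'
          ≤ ∑' s' : S, M.P s (σ (M.obs s)) s' * 1 :=
            ENNReal.tsum_le_tsum fun s' => mul_le_mul_right (ih s') _
        _ = 1 := by simp [(M.P s (σ (M.obs s))).tsum_coe]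

lemma auxG_mem {s : S} (hs : s ∈ T) : ∀ n, auxG M σ T n s = 0 := by
  intro n; cases n <;> simp [auxG, hs]

lemma auxF_succ_le : ∀ n s, auxF M σ T n s ≤ auxF M σ T (n + 1) s := by
  intro n
  induction n with
  | zero =>
    intro s
    by_cases h : s ∈ T <;> simp [auxF, h]
  | succ n ih =>
    intro s
    by_cases h : s ∈ T
    · simp [auxF, h]
    · simp only [auxF, if_neg h]
      exact ENNReal.tsum_le_tsum fun s' => mul_le_mul_right (ih s') _

lemma auxF_mono (s : S) : Monotone fun n => auxF M σ T n s :=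
  monotone_nat_of_le_succ fun n => auxF_succ_le M σ T n s

lemma auxF_add_auxG : ∀ n s, auxF M σ T n s + auxG M σ T n s = 1 := by
  intro n
  induction n with
  | zero => intro s; by_cases h : s ∈ T <;> simp [auxF, auxG, h]
  | succ n ih =>
    intro s
    by_cases h : s ∈ T
    · simp [auxF, auxG, h]
    · simp only [auxF, auxG, if_neg h]
      rw [← ENNReal.tsum_add]
      calc ∑' s' : S, (M.P s (σ (M.obs s)) s' * auxF M σ T n s'
              + M.P s (σ (M.obs s)) s' * auxG M σ T n s')
          = ∑' s' : S, M.P s (σ (M.obs s)) s' := by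
            refine tsum_congr fun s' => ?_
            rw [← mul_add, ih s', mul_one]
        _ = 1 := (M.P s (σ (M.obs s))).tsum_coe

lemma auxF_eq_one_sub : ∀ n s, auxF M σ T n s = 1 - auxG M σ T n s := fun n s =>
  ENNReal.eq_sub_of_add_eq (lt_of_le_of_lt (auxG_le_one M σ T n s) ENNReal.one_lt_top).ne
    (auxF_add_auxG M σ T n s)

/-- Main lemma: under the ranking hypothesis, the reach probability tends to 1
from every state of the closed set `C`. -/
lemma sup_auxF_eq_one [Fintype S] (REACH : Set S) (C : Set S)
    (hclosed : ∀ s ∈ C, ∀ s', M.P s (σ (M.obs s)) s' ≠ 0 → s' ∈ C)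
    (r : S → ℝ)
    (hrank : ∀ s ∈ C, s ∉ REACH →
      ∃ s', M.P s (σ (M.obs s)) s' ≠ 0 ∧ r s > r s') :
    ∀ s ∈ C, ⨆ n, auxF M σ REACH n s = 1 := by
  classical
  set CF : Finset S := Finset.univ.filter (· ∈ C) with hCF
  have hmemCF : ∀ s : S, s ∈ CF ↔ s ∈ C := by
    intro s; simp [hCF]
  -- Step 1: every state of C has positive reach probability at some time.
  have per : ∀ k, ∀ s ∈ C, (CF.filter fun t => r t < r s).card ≤ k →
      ∃ n, 0 < auxF M σ REACH n s := by
    intro k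
    induction k with
    | zero =>
      intro s hs hc
      by_cases hsR : s ∈ REACH
      · exact ⟨0, by simp [auxF, hsR]⟩
      · obtain ⟨t, hpt, hrt⟩ := hrank s hs hsR
        exfalso
        have htm : t ∈ CF.filter fun u => r u < r s := by
          simp [hmemCF, hclosed s hs t hpt, hrt, Finset.mem_filter]
        have := Finset.card_pos.mpr ⟨t, htm⟩
        omega
    | succ k ih =>
      intro s hs hc
      by_cases hsR : s ∈ REACH
      · exact ⟨0, by simp [auxF, hsR]⟩
      · obtain ⟨t, hpt, hrt⟩ := hrank s hs hsR
        have htC : t ∈ C := hclosed s hs t hpt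
        have hsubset : (CF.filter fun u => r u < r t) ⊆ CF.filter fun u => r u < r s := by
          intro u hu
          rw [Finset.mem_filter] at hu ⊢
          exact ⟨hu.1, lt_trans hu.2 hrt⟩
        have htm : t ∈ CF.filter fun u => r u < r s := by
          simp [hmemCF, htC, hrt, Finset.mem_filter]
        have hlt : (CF.filter fun u => r u < r t).card < (CF.filter fun u => r u < r s).card := by
          refine Finset.card_lt_card ⟨hsubset, fun hrev => ?_⟩
          have := hrev htm
          rw [Finset.mem_filter] at this
          exact lt_irrefl _ this.2
        obtain ⟨n, hn⟩ := ih t htC (by omega)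
        refine ⟨n + 1, ?_⟩
        have hle : M.P s (σ (M.obs s)) t * auxF M σ REACH n t ≤
            ∑' s' : S, M.P s (σ (M.obs s)) s' * auxF M σ REACH n s' := ENNReal.le_tsum t
        have hpos : 0 < M.P s (σ (M.obs s)) t * auxF M σ REACH n t :=
          ENNReal.mul_pos hpt hn.ne'
        calc (0 : ℝ≥0∞) < M.P s (σ (M.obs s)) t * auxF M σ REACH n t := hpos
          _ ≤ ∑' s' : S, M.P s (σ (M.obs s)) s' * auxF M σ REACH n s' := hle
          _ = auxF M σ REACH (n + 1) s := by simp [auxF, hsR]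
  have per' : ∀ s ∈ C, ∃ n, 0 < auxF M σ REACH n s := fun s hs => per _ s hs le_rfl
  -- Uniform time N with positive reach probability from all of C.
  let nf : S → ℕ := fun s => if h : s ∈ C then (per' s h).choose else 0
  set N : ℕ := Finset.univ.sup nf with hN
  have hFN : ∀ s ∈ C, 0 < auxF M σ REACH N s := by
    intro s hs
    have h2 : nf s = (per' s hs).choose := dif_pos hs
    have h1 : 0 < auxF M σ REACH (nf s) s := by
      rw [h2]; exact (per' s hs).choose_spec
    exact lt_of_lt_of_le h1 (auxF_mono M σ REACH s (Finset.le_sup (Finset.mem_univ s)))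
  set q : ℝ≥0∞ := CF.sup (auxG M σ REACH N) with hq
  have hq1 : q < 1 := by
    rw [hq]
    refine Finset.sup_lt_iff (by norm_num) |>.mpr fun s hsCF => ?_
    have hsC : s ∈ C := (hmemCF s).mp hsCF
    refine lt_of_le_of_ne (auxG_le_one M σ REACH N s) fun hG => ?_
    have hFG := auxF_add_auxG M σ REACH N s
    rw [hG] at hFG
    have h3 : auxF M σ REACH N s + 1 = 0 + 1 := by rw [hFG, zero_add]
    have h0 : auxF M σ REACH N s = 0 :=
      (ENNReal.add_left_inj ENNReal.one_ne_top).mp h3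
    exact (hFN s hsC).ne' h0
  -- Submultiplicativity of the non-reach probability.
  have mult : ∀ m n, ∀ s ∈ C,
      auxG M σ REACH (m + n) s ≤ auxG M σ REACH m s * CF.sup (auxG M σ REACH n) := by
    intro m
    induction m with
    | zero =>
      intro n s hs
      by_cases hsR : s ∈ REACH
      · simp [auxG_mem M σ REACH hsR]
      · have h1 : auxG M σ REACH 0 s = 1 := by simp [auxG, hsR]
        rw [zero_add, h1, one_mul]
        exact Finset.le_sup ((hmemCF s).mpr hs)
    | succ m ih =>
      intro n s hs
      by_cases hsR : s ∈ REACH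
      · simp [auxG_mem M σ REACH hsR]
      · have hL : auxG M σ REACH (m + 1 + n) s =
            ∑' s' : S, M.P s (σ (M.obs s)) s' * auxG M σ REACH (m + n) s' := by
          rw [show m + 1 + n = (m + n) + 1 by ring]
          simp [auxG, hsR]
        have hR' : auxG M σ REACH (m + 1) s =
            ∑' s' : S, M.P s (σ (M.obs s)) s' * auxG M σ REACH m s' := by
          simp [auxG, hsR]
        rw [hL, hR']
        calc ∑' s' : S, M.P s (σ (M.obs s)) s' * auxG M σ REACH (m + n) s'
            ≤ ∑' s' : S, M.P s (σ (M.obs s)) s' * auxG M σ REACH m s'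
                * CF.sup (auxG M σ REACH n) := by
              refine ENNReal.tsum_le_tsum fun s' => ?_
              by_cases hp : M.P s (σ (M.obs s)) s' = 0
              · simp [hp]
              · rw [mul_assoc]
                exact mul_le_mul_right (ih n s' (hclosed s hs s' hp)) _
          _ = (∑' s' : S, M.P s (σ (M.obs s)) s' * auxG M σ REACH m s')
                * CF.sup (auxG M σ REACH n) := ENNReal.tsum_mul_right
  -- Geometric decay.
  have powk : ∀ k, ∀ s ∈ C, auxG M σ REACH (k * N) s ≤ q ^ k := by
    intro k
    induction k with
    | zero => intro s hs; simpa using auxG_le_one M σ REACH 0 s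
    | succ k ih =>
      intro s hs
      rw [show (k + 1) * N = N + k * N by ring]
      calc auxG M σ REACH (N + k * N) s
          ≤ auxG M σ REACH N s * CF.sup (auxG M σ REACH (k * N)) := mult N (k * N) s hs
        _ ≤ q * q ^ k := by
            refine mul_le_mul' (Finset.le_sup ((hmemCF s).mpr hs)) ?_
            exact Finset.sup_le fun t ht => ih t ((hmemCF t).mp ht)
        _ = q ^ (k + 1) := by rw [pow_succ, mul_comm]
  have hanti : Antitone fun k : ℕ => q ^ k := by
    intro a b hab
    calc q ^ b = q ^ a * q ^ (b - a) := by rw [← pow_add]; congr 1; omega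
      _ ≤ q ^ a * 1 := mul_le_mul_right (pow_le_one' hq1.le _) _
      _ = q ^ a := mul_one _
  have hiInf : ⨅ k : ℕ, q ^ k = 0 :=
    tendsto_nhds_unique (tendsto_atTop_iInf hanti)
      (ENNReal.tendsto_pow_atTop_nhds_zero_of_lt_one hq1)
  intro s hs
  refine le_antisymm (iSup_le fun n => auxF_le_one M σ REACH n s) ?_
  calc (1 : ℝ≥0∞) = 1 - ⨅ k : ℕ, q ^ k := by rw [hiInf, tsub_zero]
    _ = ⨆ k : ℕ, 1 - q ^ k := ENNReal.sub_iInf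
    _ ≤ ⨆ k : ℕ, auxF M σ REACH (k * N) s := by
        refine iSup_mono fun k => ?_
        rw [auxF_eq_one_sub]
        exact tsub_le_tsub_left (powk k s hs) 1
    _ ≤ ⨆ n, auxF M σ REACH n s := iSup_le fun k => le_iSup (fun n => auxF M σ REACH n s) (k * N)

end MLAux

/-- A memoryless deterministic observation-based policy `σ` whose
reached set `C` from initial belief support `b₀` (i) avoids AVOID, (ii) is
closed under σ-successors, and (iii) admits a real-valued ranking function
decreasing outside REACH, is winning from `b₀`. -/
theorem memoryless_ranking_winning {S Act Ω : Type} [Fintype S] [Fintype Act]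
    (M : POMDP S Act Ω) (REACH AVOID : Set S)
    (hdisj : Disjoint REACH AVOID)
    (hR : M.Absorbing REACH) (hA : M.Absorbing AVOID)
    (σ : Ω → Act) (b₀ C : Set S) (hb₀ : M.IsBeliefSupport b₀)
    (hinit : b₀ ⊆ C)
    -- (i) no AVOID state is reached
    (havoid : C ∩ AVOID = ∅)
    -- (ii) C is closed under σ-successors
    (hclosed : ∀ s ∈ C, ∀ s', M.P s (σ (M.obs s)) s' ≠ 0 → s' ∈ C)
    -- (iii) ranking function
    (r : S → ℝ)
    (hrank : ∀ s ∈ C, s ∉ REACH →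
      ∃ s', M.P s (σ (M.obs s)) s' ≠ 0 ∧ r s > r s') :
    M.WinningFromSupport REACH AVOID (fun _ z => PMF.pure (σ z)) b₀ := by
  classical
  intro β hβ
  have hsub : ∀ s : S, β s ≠ 0 → s ∈ C := by
    intro s h
    exact hinit (hβ ▸ (PMF.mem_support_iff β s).mpr h)
  constructor
  · -- AVOID is never reached
    have hAz : ∀ n, ∀ s ∈ C, MLAux.auxF M σ AVOID n s = 0 := by
      intro n
      induction n with
      | zero =>
        intro s hs
        have hsA : s ∉ AVOID := fun h =>
          Set.eq_empty_iff_forall_notMem.mp havoid s ⟨hs, h⟩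
        simp [MLAux.auxF, hsA]
      | succ n ih =>
        intro s hs
        have hsA : s ∉ AVOID := fun h =>
          Set.eq_empty_iff_forall_notMem.mp havoid s ⟨hs, h⟩
        simp only [MLAux.auxF, if_neg hsA]
        rw [ENNReal.tsum_eq_zero]
        intro s'
        by_cases hp : M.P s (σ (M.obs s)) s' = 0
        · simp [hp]
        · rw [ih s' (hclosed s hs s' hp), mul_zero]
    have hz : ∀ n, ∑' s : S, β s * M.reachN (fun _ z => PMF.pure (σ z)) AVOID n [] s = 0 := by
      intro n
      rw [ENNReal.tsum_eq_zero]
      intro s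
      by_cases hb : β s = 0
      · simp [hb]
      · rw [MLAux.reachN_eq_auxF, hAz n s (hsub s hb), mul_zero]
    simp only [POMDP.prReach, hz, iSup_const]
  · -- REACH is reached with probability 1
    have hmain := MLAux.sup_auxF_eq_one M σ REACH C hclosed r hrank
    show (⨆ n, ∑' s : S, β s * M.reachN (fun _ z => PMF.pure (σ z)) REACH n [] s) = 1
    calc ⨆ n, ∑' s : S, β s * M.reachN (fun _ z => PMF.pure (σ z)) REACH n [] s
        = ⨆ n, ∑ s : S, β s * MLAux.auxF M σ REACH n s := by
          refine iSup_congr fun n => ?_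
          rw [tsum_fintype]
          exact Finset.sum_congr rfl fun s _ => by rw [MLAux.reachN_eq_auxF]
      _ = ∑ s : S, ⨆ n, β s * MLAux.auxF M σ REACH n s :=
          (ENNReal.finsetSum_iSup_of_monotone
            (f := fun (s : S) (n : ℕ) => β s * MLAux.auxF M σ REACH n s)
            (fun s a b hab =>
              mul_le_mul_right (MLAux.auxF_mono M σ REACH s hab) _)).symm
      _ = ∑ s : S, β s * ⨆ n, MLAux.auxF M σ REACH n s :=
          Finset.sum_congr rfl fun s _ =>
            (ENNReal.mul_iSup (β s) fun n => MLAux.auxF M σ REACH n s).symm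
      _ = ∑ s : S, β s := by
          refine Finset.sum_congr rfl fun s _ => ?_
          by_cases hb : β s = 0
          · simp [hb]
          · rw [hmain s (hsub s hb), mul_one]
      _ = 1 := by rw [← tsum_fintype (L := SummationFilter.unconditional _)]; exact β.tsum_coe
end

section
/- In the graph-based preprocessing step: if W is a winning region of the belief-support MDP and z is an observation such that there exists an action α with, for every state s with obs(s) = z, Post(s,α) entirely contained in the union of the belief supports of W in a way that the successor belief supports are in W, then the full-observation belief support b_z = {s | obs(s) = z} is winning and W ∪ {b_z} (closed under subsets) is again a winning region. -/
open scoped ENNReal Classical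

namespace POMDP

variable {S Act Ω : Type}

/-- The successor belief support of `b` under action `α`, conditioned on
observation `z`. -/
noncomputable def succSupport (M : POMDP S Act Ω) [Fintype S]
    (b : Finset S) (α : Act) (z : Ω) : Finset S :=
  Finset.univ.filter (fun s' => M.obs s' = z ∧ ∃ s ∈ b, M.P s α s' ≠ 0)

/-- The set of possible successor belief supports of `b` under action `α`. -/
noncomputable def Post (M : POMDP S Act Ω) [Fintype S]
    (b : Finset S) (α : Act) : Set (Finset S) :=
  {b' | ∃ z : Ω, b' = M.succSupport b α z ∧ b'.Nonempty}

/-- The belief-support MDP of a POMDP, represented as a fully observable POMDP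
(observation function is the identity). Transition probabilities are an arbitrary
positive distribution over the successor supports, realized by sampling a
uniform state of the support and a transition of the POMDP. -/
noncomputable def belSup (M : POMDP S Act Ω) [Fintype S] :
    POMDP (Finset S) Act (Finset S) where
  P := fun b α =>
    if h : b.Nonempty then
      PMF.map (fun s' => M.succSupport b α (M.obs s'))
        ((PMF.uniformOfFinset b h).bind fun s => M.P s α)
    else PMF.pure b
  obs := id

/-- Lifted AVOID set: belief supports intersecting AVOID. -/
def liftedAvoid (AVOID : Set S) : Set (Finset S) := {b | ∃ s ∈ b, s ∈ AVOID}

/-- Lifted REACH set: belief supports contained in REACH. -/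
def liftedReach (REACH : Set S) : Set (Finset S) := {b | ∀ s ∈ b, s ∈ REACH}

end POMDP


namespace POMDPAux

open POMDP

variable {S Act Ω : Type}

lemma reachN_le_one (M : POMDP S Act Ω) (σ : Policy Act Ω) (T : Set S) :
    ∀ (n : ℕ) (h : List (Ω × Act)) (s : S), M.reachN σ T n h s ≤ 1 := by
  intro n
  induction n with
  | zero => intro h s; rw [POMDP.reachN]; split <;> simp
  | succ n ih =>
    intro h s
    rw [POMDP.reachN]
    split
    · exact le_rfl
    · calc ∑' a : Act, σ h (M.obs s) a * ∑' s' : S, M.P s a s' *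
              M.reachN σ T n (h ++ [(M.obs s, a)]) s'
          ≤ ∑' a : Act, σ h (M.obs s) a * 1 := by
            refine ENNReal.tsum_le_tsum fun a => ?_
            refine mul_le_mul_right ?_ _
            calc ∑' s' : S, M.P s a s' * M.reachN σ T n (h ++ [(M.obs s, a)]) s'
                ≤ ∑' s' : S, M.P s a s' * 1 :=
                  ENNReal.tsum_le_tsum fun s' => mul_le_mul_right (ih _ _) _
              _ = 1 := by simp [(M.P s a).tsum_coe]
        _ = 1 := by simp [(σ h (M.obs s)).tsum_coe]

lemma reachN_mono (M : POMDP S Act Ω) (σ : Policy Act Ω) (T : Set S) :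
    ∀ (n : ℕ) (h : List (Ω × Act)) (s : S),
      M.reachN σ T n h s ≤ M.reachN σ T (n + 1) h s := by
  intro n
  induction n with
  | zero =>
    intro h s
    rw [POMDP.reachN, POMDP.reachN]
    split
    · exact le_rfl
    · exact zero_le
  | succ n ih =>
    intro h s
    rw [POMDP.reachN]
    conv_rhs => rw [POMDP.reachN]
    split
    · exact le_rfl
    · exact ENNReal.tsum_le_tsum fun a => mul_le_mul_right
        (ENNReal.tsum_le_tsum fun s' => mul_le_mul_right (ih _ _) _) _

lemma reachN_monotone (M : POMDP S Act Ω) (σ : Policy Act Ω) (T : Set S)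
    (h : List (Ω × Act)) (s : S) : Monotone fun n => M.reachN σ T n h s :=
  monotone_nat_of_le_succ fun n => reachN_mono M σ T n h s

lemma sum_forces_one {ι : Type*} (s : Finset ι) (w x : ι → ℝ≥0∞)
    (hx : ∀ i ∈ s, x i ≤ 1) (h : ∑ i ∈ s, w i * x i = ∑ i ∈ s, w i)
    (hfin : ∑ i ∈ s, w i ≠ ⊤) {i : ι} (hi : i ∈ s) (hw : w i ≠ 0) : x i = 1 := by
  by_contra hxi
  have hxil : x i < 1 := lt_of_le_of_ne (hx i hi) hxi
  have hz : w i * (1 - x i) ≠ 0 := by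
    refine mul_ne_zero hw ?_
    simpa [tsub_eq_zero_iff_le] using not_le.mpr hxil
  have key : ∑ j ∈ s, w j * x j + w i * (1 - x i) ≤ ∑ j ∈ s, w j := by
    rw [← Finset.add_sum_erase _ (fun j => w j * x j) hi, ← Finset.add_sum_erase _ w hi]
    have h1 : w i * x i + w i * (1 - x i) = w i := by
      rw [← mul_add, add_tsub_cancel_of_le (hx i hi), mul_one]
    calc w i * x i + ∑ j ∈ s.erase i, w j * x j + w i * (1 - x i)
        = (w i * x i + w i * (1 - x i)) + ∑ j ∈ s.erase i, w j * x j := by ring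
      _ = w i + ∑ j ∈ s.erase i, w j * x j := by rw [h1]
      _ ≤ w i + ∑ j ∈ s.erase i, w j := by
          gcongr with j hj
          exact mul_le_of_le_one_right' (hx j (Finset.mem_of_mem_erase hj))
  rw [h] at key
  exact absurd key (not_le.mpr (ENNReal.lt_add_right hfin hz))

lemma iSup_succ_mono {f : ℕ → ℝ≥0∞} (hf : Monotone f) : ⨆ n, f (n + 1) = ⨆ n, f n :=
  le_antisymm (iSup_le fun n => le_iSup f (n + 1))
    (iSup_le fun n => le_trans (hf (Nat.le_succ n)) (le_iSup (fun n => f (n + 1)) n))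

end POMDPAux

namespace POMDPAux

open POMDP

variable {S Act Ω : Type}

/-- Head observation of a history, defaulting to the current observation. -/
def headObs (rest : List (Ω × Act)) (o : Ω) : Ω :=
  match rest with
  | [] => o
  | p :: _ => p.1

/-- The policy that plays `α` first and then follows `τ z'` where `z'` is the
first observation after the initial step. -/
noncomputable def shiftPolicy (α : Act) (τ : Ω → Policy Act Ω) : Policy Act Ω :=
  fun h o => match h with
  | [] => PMF.pure α
  | _ :: rest => τ (headObs rest o) rest o

lemma reachN_shift (M : POMDP S Act Ω) (α : Act) (τ : Ω → Policy Act Ω) (T : Set S)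
    (z' : Ω) : ∀ (n : ℕ) (e : Ω × Act) (rest : List (Ω × Act)) (s : S),
    headObs rest (M.obs s) = z' →
    M.reachN (shiftPolicy α τ) T n (e :: rest) s = M.reachN (τ z') T n rest s := by
  intro n
  induction n with
  | zero => intro e rest s _; rw [POMDP.reachN, POMDP.reachN]
  | succ n ih =>
    intro e rest s hh
    rw [POMDP.reachN]
    conv_rhs => rw [POMDP.reachN]
    split
    · rfl
    · have hpol : shiftPolicy α τ (e :: rest) (M.obs s) = τ z' rest (M.obs s) := by
        rw [shiftPolicy, hh]
      rw [hpol]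
      refine tsum_congr fun a => ?_
      refine congrArg _ (tsum_congr fun s' => congrArg _ ?_)
      have : (e :: rest) ++ [(M.obs s, a)] = e :: (rest ++ [(M.obs s, a)]) := rfl
      rw [this, ih e (rest ++ [(M.obs s, a)]) s']
      cases rest with
      | nil => simpa [headObs] using hh
      | cons p t => simpa [headObs] using hh

/-- From a winning policy for a belief support, winning behaviour from each
pure state of the support. -/
lemma winning_support_pure (M : POMDP S Act Ω) [Fintype S] (REACH AVOID : Set S)
    (σ : Policy Act Ω) (b' : Finset S) (hne : b'.Nonempty)
    (hws : M.WinningFromSupport REACH AVOID σ (↑b' : Set S)) {s' : S} (hs' : s' ∈ b') :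
    (∀ n, M.reachN σ AVOID n [] s' = 0) ∧ (⨆ n, M.reachN σ REACH n [] s') = 1 := by
  set βu : PMF S := PMF.uniformOfFinset b' hne with hβu
  have hsupp : βu.support = (↑b' : Set S) := PMF.support_uniformOfFinset hne
  have hw := hws βu hsupp
  have hβs' : βu s' ≠ 0 := by
    rw [← PMF.mem_support_iff, hsupp]; exact_mod_cast hs'
  constructor
  · intro n
    have h0 : M.prReach σ AVOID βu = 0 := hw.1
    rw [POMDP.prReach] at h0
    have hn : (∑' s : S, βu s * M.reachN σ AVOID n [] s) = 0 :=
      le_antisymm (h0 ▸ le_iSup (fun n => ∑' s : S, βu s * M.reachN σ AVOID n [] s) n)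
        (zero_le)
    have := (ENNReal.tsum_eq_zero.mp hn) s'
    rcases mul_eq_zero.mp this with h | h
    · exact absurd h hβs'
    · exact h
  · have h1 : M.prReach σ REACH βu = 1 := hw.2
    rw [POMDP.prReach] at h1
    have hsum : ∀ n, (∑' s : S, βu s * M.reachN σ REACH n [] s)
        = ∑ s : S, βu s * M.reachN σ REACH n [] s := fun n => tsum_fintype _
    simp_rw [hsum] at h1
    have hexch : ∑ s : S, βu s * ⨆ n, M.reachN σ REACH n [] s
        = ⨆ n, ∑ s : S, βu s * M.reachN σ REACH n [] s := by
      simp_rw [ENNReal.mul_iSup]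
      exact ENNReal.finsetSum_iSup_of_monotone fun s =>
        fun i j hij => mul_le_mul_right (reachN_monotone M σ REACH [] s hij) _
    have hforce : ∑ s : S, βu s * ⨆ n, M.reachN σ REACH n [] s = ∑ s : S, βu s := by
      rw [hexch, h1]
      have : ∑ s : S, βu s = 1 := by
        rw [← βu.tsum_coe, tsum_fintype]
      rw [this]
    refine sum_forces_one Finset.univ (fun s => βu s)
      (fun s => ⨆ n, M.reachN σ REACH n [] s)
      (fun s _ => iSup_le fun n => reachN_le_one M σ REACH n [] s)
      hforce ?_ (Finset.mem_univ s') hβs'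
    exact ne_of_eq_of_ne (by rw [← βu.tsum_coe, tsum_fintype]) ENNReal.one_ne_top

end POMDPAux

/-- Graph-based preprocessing step. If `W` is a winning region
(closed under nonempty subsets) and for observation `z` there is an action `α`
such that all successors of the full observation support `b_z` lie in `W`, then
`b_z` is winning, and `W ∪ {b_z}` is again a winning region. -/
theorem graph_preprocessing_sound {S Act Ω : Type} [Fintype S] [Fintype Act]
    (M : POMDP S Act Ω) (REACH AVOID : Set S)
    (hdisj : Disjoint REACH AVOID)
    (hR : M.Absorbing REACH) (hA : M.Absorbing AVOID)
    (W : Set (Finset S))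
    (hwin : ∀ b ∈ W, M.WinningSupport REACH AVOID (↑b : Set S))
    (hsubclosed : ∀ b ∈ W, ∀ b' : Finset S, b' ⊆ b → b'.Nonempty → b' ∈ W)
    (z : Ω) (hz : ∃ s : S, M.obs s = z) (α : Act)
    (hpost : M.Post (Finset.univ.filter (fun s => M.obs s = z)) α ⊆ W) :
    M.WinningSupport REACH AVOID {s | M.obs s = z} ∧
    ∀ b ∈ W ∪ {Finset.univ.filter (fun s => M.obs s = z)},
      M.WinningSupport REACH AVOID (↑b : Set S) := by
  classical
  set bz : Finset S := Finset.univ.filter (fun s => M.obs s = z) with hbz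
  -- choose a winning policy for each potential successor support
  have hchoice : ∀ z' : Ω, ∃ σ : POMDP.Policy Act Ω,
      M.succSupport bz α z' ∈ W →
        M.WinningFromSupport REACH AVOID σ (↑(M.succSupport bz α z') : Set S) := by
    intro z'
    by_cases h : M.succSupport bz α z' ∈ W
    · obtain ⟨σ, hσ⟩ := hwin _ h
      exact ⟨σ, fun _ => hσ⟩
    · exact ⟨fun _ _ => PMF.pure α, fun hc => absurd hc h⟩
  choose τ hτ using hchoice
  -- pointwise claim for successor states
  have hP : ∀ s' : S, (∃ s ∈ bz, M.P s α s' ≠ 0) →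
      (∀ n, M.reachN (τ (M.obs s')) AVOID n [] s' = 0) ∧
      (⨆ n, M.reachN (τ (M.obs s')) REACH n [] s') = 1 := by
    intro s' hex
    have hs' : s' ∈ M.succSupport bz α (M.obs s') :=
      Finset.mem_filter.mpr ⟨Finset.mem_univ s', rfl, hex⟩
    have hne : (M.succSupport bz α (M.obs s')).Nonempty := ⟨s', hs'⟩
    have hW : M.succSupport bz α (M.obs s') ∈ W := hpost ⟨M.obs s', rfl, hne⟩
    exact POMDPAux.winning_support_pure M REACH AVOID _ _ hne (hτ _ hW) hs'
  -- states of bz are not in AVOID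
  have hA0 : ∀ s ∈ bz, s ∉ AVOID := by
    intro s hs hsA
    have hPs : M.P s α s ≠ 0 := by
      rw [hA s hsA α]; simp
    have h0 := (hP s ⟨s, hs, hPs⟩).1 0
    rw [POMDP.reachN] at h0
    simp [hsA] at h0
  -- the one-step unfolding of the shifted policy
  have hstep : ∀ (T : Set S) (n : ℕ) (s : S), M.obs s = z →
      M.reachN (POMDPAux.shiftPolicy α τ) T (n + 1) [] s =
        if s ∈ T then 1
        else ∑' s' : S, M.P s α s' * M.reachN (τ (M.obs s')) T n [] s' := by
    intro T n s _
    rw [POMDP.reachN]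
    split
    · rfl
    · have hpol : POMDPAux.shiftPolicy α τ [] (M.obs s) = PMF.pure α := rfl
      rw [hpol]
      rw [tsum_eq_single α (fun b hb => by simp [PMF.pure_apply, hb])]
      simp only [PMF.pure_apply, eq_self_iff_true, if_true, one_mul, List.nil_append]
      exact tsum_congr fun s' => congrArg _
        (POMDPAux.reachN_shift M α τ T (M.obs s') n (M.obs s, α) [] s' rfl)
  have hbzmem : ∀ s : S, s ∈ bz ↔ M.obs s = z := by
    intro s; simp [hbz]
  -- main winning claim
  have hwinbz : M.WinningSupport REACH AVOID {s | M.obs s = z} := by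
    refine ⟨POMDPAux.shiftPolicy α τ, ?_⟩
    intro β hβ
    have hmem : ∀ s : S, β s ≠ 0 → s ∈ bz := by
      intro s h
      have hsupp : s ∈ β.support := (PMF.mem_support_iff β s).mpr h
      rw [hβ] at hsupp
      exact (hbzmem s).mpr hsupp
    constructor
    · -- AVOID probability is zero
      rw [POMDP.prReach]
      refine le_antisymm (iSup_le fun n => le_of_eq ?_) (zero_le)
      rw [ENNReal.tsum_eq_zero]
      intro s
      by_cases hβs : β s = 0
      · simp [hβs]
      · have hsbz := hmem s hβs
        have hsz : M.obs s = z := (hbzmem s).mp hsbz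
        have hzero : M.reachN (POMDPAux.shiftPolicy α τ) AVOID n [] s = 0 := by
          cases n with
          | zero => rw [POMDP.reachN]; simp [hA0 s hsbz]
          | succ m =>
            rw [hstep AVOID m s hsz, if_neg (hA0 s hsbz), ENNReal.tsum_eq_zero]
            intro s'
            by_cases hp : M.P s α s' = 0
            · simp [hp]
            · rw [(hP s' ⟨s, hsbz, hp⟩).1 m, mul_zero]
        rw [hzero, mul_zero]
    · -- REACH probability is one
      rw [POMDP.prReach]
      have gmono : Monotone (fun n =>
          ∑' s : S, β s * M.reachN (POMDPAux.shiftPolicy α τ) REACH n [] s) := by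
        intro i j hij
        exact ENNReal.tsum_le_tsum fun s => mul_le_mul_right
          (POMDPAux.reachN_monotone M _ REACH [] s hij) _
      rw [← POMDPAux.iSup_succ_mono gmono]
      -- per-state limit is 1 on the support
      have hsup1 : ∀ s : S, β s ≠ 0 →
          (⨆ n, M.reachN (POMDPAux.shiftPolicy α τ) REACH (n + 1) [] s) = 1 := by
        intro s hβs
        have hsbz := hmem s hβs
        have hsz : M.obs s = z := (hbzmem s).mp hsbz
        by_cases hsR : s ∈ REACH
        · have heq : ∀ n : ℕ,
              M.reachN (POMDPAux.shiftPolicy α τ) REACH (n + 1) [] s = 1 := by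
            intro n; rw [hstep REACH n s hsz, if_pos hsR]
          simp only [heq]
          exact iSup_const
        · have heq : ∀ n : ℕ,
              M.reachN (POMDPAux.shiftPolicy α τ) REACH (n + 1) [] s
                = ∑ s' : S, M.P s α s' * M.reachN (τ (M.obs s')) REACH n [] s' := by
            intro n; rw [hstep REACH n s hsz, if_neg hsR, tsum_fintype]
          simp only [heq]
          have hexch2 : (⨆ n, ∑ s' : S, M.P s α s' * M.reachN (τ (M.obs s')) REACH n [] s')
              = ∑ s' : S, ⨆ n, M.P s α s' * M.reachN (τ (M.obs s')) REACH n [] s' :=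
            (ENNReal.finsetSum_iSup_of_monotone
              (f := fun s' n => M.P s α s' * M.reachN (τ (M.obs s')) REACH n [] s')
              (fun s' i j hij => mul_le_mul_right
                (POMDPAux.reachN_monotone M _ REACH [] s' hij) _)).symm
          rw [hexch2]
          have hterm : ∀ s' : S,
              (⨆ n, M.P s α s' * M.reachN (τ (M.obs s')) REACH n [] s') = M.P s α s' := by
            intro s'
            rw [← ENNReal.mul_iSup]
            by_cases hp : M.P s α s' = 0
            · simp [hp]
            · rw [(hP s' ⟨s, hsbz, hp⟩).2, mul_one]
          calc ∑ s' : S, ⨆ n, M.P s α s' * M.reachN (τ (M.obs s')) REACH n [] s'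
              = ∑ s' : S, M.P s α s' := Finset.sum_congr rfl fun s' _ => hterm s'
            _ = 1 := by rw [← (M.P s α).tsum_coe, tsum_fintype]
      -- exchange sup and sum, then conclude
      have hexch : (⨆ n, ∑' s : S, β s *
            M.reachN (POMDPAux.shiftPolicy α τ) REACH (n + 1) [] s)
          = ∑ s : S, ⨆ n, β s * M.reachN (POMDPAux.shiftPolicy α τ) REACH (n + 1) [] s := by
        simp_rw [tsum_fintype]
        exact (ENNReal.finsetSum_iSup_of_monotone
          (f := fun s n => β s * M.reachN (POMDPAux.shiftPolicy α τ) REACH (n + 1) [] s)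
          (fun s i j hij => mul_le_mul_right (POMDPAux.reachN_monotone M _ REACH [] s
            (Nat.succ_le_succ hij)) _)).symm
      rw [hexch]
      calc ∑ s : S, ⨆ n, β s * M.reachN (POMDPAux.shiftPolicy α τ) REACH (n + 1) [] s
          = ∑ s : S, β s := by
            refine Finset.sum_congr rfl fun s _ => ?_
            rw [← ENNReal.mul_iSup]
            by_cases hβs : β s = 0
            · simp [hβs]
            · rw [hsup1 s hβs, mul_one]
        _ = 1 := by rw [← β.tsum_coe, tsum_fintype]
  refine ⟨hwinbz, ?_⟩
  intro b hb
  rcases hb with hb | hb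
  · exact hwin b hb
  · rw [Set.mem_singleton_iff] at hb
    have hcoe : (↑b : Set S) = {s | M.obs s = z} := by
      rw [hb]; ext s
      simpa using hbzmem s
    rw [hcoe]
    exact hwinbz
end

section
/- For a safety specification (only requiring AVOID to be reached with probability 0), if W is a deadlock-free set of belief supports disjoint from the lifted AVOID set, then any ν-admissible policy (for the shield ν(b) = {α | Post(b,α) ⊆ W}) reaches AVOID with probability 0 from every b ∈ W, without any fairness assumption. -/
open scoped ENNReal Classical

namespace POMDP

variable {S Act Ω : Type}

/-- A set of belief supports is deadlock-free: every element has an action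
whose successors all stay in the set. -/
def DeadlockFree (M : POMDP S Act Ω) [Fintype S] (W : Set (Finset S)) : Prop :=
  ∀ b ∈ W, ∃ α : Act, M.Post b α ⊆ W

/-- A set of belief supports is productive towards (the lifting of) `REACH`:
from every element there is a finite path, staying in `W` and with all successors
of each step inside `W`, ending in a belief support contained in `REACH`. -/
def Productive (M : POMDP S Act Ω) [Fintype S] (REACH : Set S)
    (W : Set (Finset S)) : Prop :=
  ∀ b ∈ W, ∃ (n : ℕ) (bs : ℕ → Finset S) (as : ℕ → Act),
    bs 0 = b ∧ (∀ i ≤ n, bs i ∈ W) ∧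
    (∀ i < n, bs (i + 1) ∈ M.Post (bs i) (as i) ∧ M.Post (bs i) (as i) ⊆ W) ∧
    (∀ s ∈ bs n, s ∈ REACH)

end POMDP

/-- Safety shielding. If `W` is deadlock-free and disjoint from
the lifted AVOID set, then any policy admissible for the shield
`ν(b) = {α | Post(b,α) ⊆ W}` reaches AVOID with probability 0 from every
`b ∈ W`, without any fairness assumption. -/
theorem safety_shield_sound {S Act Ω : Type} [Fintype S] [Fintype Act]
    (M : POMDP S Act Ω) (AVOID : Set S)
    (W : Set (Finset S))
    (hdf : M.DeadlockFree W)
    (havoid : ∀ b ∈ W, b ∉ POMDP.liftedAvoid AVOID)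
    (ν : Finset S → Set Act)
    (hν : ∀ b, ν b = {α | M.Post b α ⊆ W})
    (hνne : ∀ b ∈ W, (ν b).Nonempty)
    (σ : POMDP.Policy Act (Finset S))
    (hadm : ∀ (h : List (Finset S × Act)) (b : Finset S), b ∈ W →
      (σ h b).support ⊆ ν b) :
    ∀ b ∈ W,
      (M.belSup).prReach σ (POMDP.liftedAvoid AVOID) (PMF.pure b) = 0 := by
  have key : ∀ (n : ℕ) (h : List (Finset S × Act)) (b : Finset S), b ∈ W →
      (M.belSup).reachN σ (POMDP.liftedAvoid AVOID) n h b = 0 := by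
    intro n
    induction n with
    | zero =>
      intro h b hb
      simp [POMDP.reachN, havoid b hb]
    | succ n ih =>
      intro h b hb
      rw [POMDP.reachN, if_neg (havoid b hb), ENNReal.tsum_eq_zero]
      intro α
      rcases eq_or_ne (σ h (M.belSup.obs b) α) 0 with hσ | hσ
      · rw [hσ, zero_mul]
      · have hαsup : α ∈ (σ h b).support := hσ
        have hPost : M.Post b α ⊆ W := by
          have h1 := hadm h b hb hαsup
          rw [hν b] at h1
          exact h1
        apply mul_eq_zero_of_right
        rw [ENNReal.tsum_eq_zero]
        intro b'
        rcases eq_or_ne (M.belSup.P b α b') 0 with hP | hP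
        · rw [hP, zero_mul]
        · apply mul_eq_zero_of_right
          apply ih
          have hb' : b' ∈ (M.belSup.P b α).support := hP
          by_cases hbne : b.Nonempty
          · have hPeq : M.belSup.P b α = PMF.map (fun s' => M.succSupport b α (M.obs s'))
                ((PMF.uniformOfFinset b hbne).bind fun s => M.P s α) := by
              simp [POMDP.belSup, hbne]
            rw [hPeq, PMF.support_map] at hb'
            obtain ⟨s', hs', rfl⟩ := hb'
            rw [PMF.support_bind] at hs'
            simp only [Set.mem_iUnion, PMF.support_uniformOfFinset, Finset.mem_coe] at hs'
            obtain ⟨s, hs, hs'P⟩ := hs'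
            have hmem : s' ∈ M.succSupport b α (M.obs s') := by
              simp only [POMDP.succSupport, Finset.mem_filter, Finset.mem_univ, true_and]
              exact ⟨s, hs, hs'P⟩
            apply hPost
            rw [POMDP.Post, Set.mem_setOf_eq]
            exact ⟨M.obs s', rfl, ⟨s', hmem⟩⟩
          · have hPeq : M.belSup.P b α = PMF.pure b := by
              simp [POMDP.belSup, hbne]
            rw [hPeq, PMF.support_pure, Set.mem_singleton_iff] at hb'
            rw [hb']
            exact hb
  intro b hb
  rw [POMDP.prReach]
  have hz : ∀ n, ∑' s : Finset S,
      (PMF.pure b) s * (M.belSup).reachN σ (POMDP.liftedAvoid AVOID) n [] s = 0 := by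
    intro n
    rw [ENNReal.tsum_eq_zero]
    intro s
    by_cases hsb : s = b
    · subst hsb
      rw [key n [] s hb, mul_zero]
    · rw [PMF.pure_apply, if_neg hsb, zero_mul]
  simp only [hz]
  simp
end

section
/- The support map commutes with belief update: if beliefs b₁ and b₂ have the same support, then for every action α and observation z, P(b₁,α,z) > 0 iff P(b₂,α,z) > 0, and in that case supp(⟦b₁|α,z⟧) = supp(⟦b₂|α,z⟧). -/
open scoped ENNReal Classical

namespace POMDP

variable {S Act Ω : Type}

/-- `P(b, α, z)`: the probability to observe `z` after taking `α` in belief `b`. -/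
noncomputable def obsProb (M : POMDP S Act Ω) (b : PMF S) (α : Act) (z : Ω) : ℝ≥0∞ :=
  ∑' s : S, b s * ∑' s' : S, (if M.obs s' = z then M.P s α s' else 0)

/-- `⟦b | α, z⟧`: the belief obtained by taking `α` from `b`, conditioned on
observing `z`. -/
noncomputable def beliefUpdate (M : POMDP S Act Ω) (b : PMF S) (α : Act) (z : Ω)
    (s' : S) : ℝ≥0∞ :=
  (if M.obs s' = z then ∑' s : S, b s * M.P s α s' else 0) / M.obsProb b α z

end POMDP

private lemma tsum_mul_ne_zero_iff {S : Type} (b : PMF S) (f : S → ℝ≥0∞) :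
    (∑' s : S, b s * f s) ≠ 0 ↔ ∃ s ∈ b.support, f s ≠ 0 := by
  rw [Ne, ENNReal.tsum_eq_zero]
  push_neg
  simp [mul_eq_zero, PMF.mem_support_iff, not_or, and_comm]

private lemma obsProb_ne_top {S Act Ω : Type} (M : POMDP S Act Ω) (b : PMF S)
    (α : Act) (z : Ω) : M.obsProb b α z ≠ ⊤ := by
  have h : M.obsProb b α z ≤ 1 := by
    unfold POMDP.obsProb
    calc ∑' s : S, b s * ∑' s' : S, (if M.obs s' = z then M.P s α s' else 0)
        ≤ ∑' s : S, b s * 1 := by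
          refine ENNReal.tsum_le_tsum fun s => mul_le_mul_right ?_ _
          calc (∑' s' : S, (if M.obs s' = z then M.P s α s' else 0))
              ≤ ∑' s' : S, M.P s α s' := ENNReal.tsum_le_tsum fun s' => by
                split <;> simp
            _ = 1 := (M.P s α).tsum_coe
      _ = 1 := by simpa using b.tsum_coe
  exact ne_top_of_le_ne_top ENNReal.one_ne_top h

/-- The support map commutes with belief update: beliefs with the
same support have the same positive-observation-probabilities, and in that case
their updated beliefs have the same support. -/
theorem belief_update_support_congr {S Act Ω : Type} [Fintype S]
    (M : POMDP S Act Ω) (b₁ b₂ : PMF S)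
    (hsupp : b₁.support = b₂.support) (α : Act) (z : Ω) :
    (M.obsProb b₁ α z ≠ 0 ↔ M.obsProb b₂ α z ≠ 0) ∧
    (M.obsProb b₁ α z ≠ 0 →
      {s' | M.beliefUpdate b₁ α z s' ≠ 0} = {s' | M.beliefUpdate b₂ α z s' ≠ 0}) := by
  constructor
  · rw [POMDP.obsProb, POMDP.obsProb, tsum_mul_ne_zero_iff, tsum_mul_ne_zero_iff, hsupp]
  · intro _
    have key : ∀ s' : S, ((∑' s : S, b₁ s * M.P s α s') ≠ 0 ↔
        (∑' s : S, b₂ s * M.P s α s') ≠ 0) := fun s' => by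
      rw [tsum_mul_ne_zero_iff, tsum_mul_ne_zero_iff, hsupp]
    ext s'
    simp only [Set.mem_setOf_eq, POMDP.beliefUpdate, Ne, ENNReal.div_eq_zero_iff,
      not_or, obsProb_ne_top, not_false_iff, and_true]
    split
    · exact key s'
    · rfl
end
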